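/- arXiv:math/0505151 — 6 statements merged into one kernel-verified Lean document; each statement's English description precedes it below -/
import Mathlib

section
/- Let C be a category. Inside the group Aut(C) of automorphisms of C, the inner automorphisms form a normal subgroup Int(C), the stable automorphisms form a normal subgroup StAut(C), and the equinumerous automorphisms form a normal subgroup EqnAut(C); moreover Int(C) ⊆ EqnAut(C) and StAut(C) ⊆ EqnAut(C). -/
open CategoryTheory

universe v u

namespace Stmt0Aux
variable {C : Type u} [Category.{v} C]

lemma mul_hom (φ ψ : Aut (Cat.of C)) :
    ((φ * ψ).hom.toFunctor : C ⥤ C) = (ψ.hom.toFunctor : C ⥤ C) ⋙ (φ.hom.toFunctor : C ⥤ C) := rfl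
lemma inv_hom' (φ : Aut (Cat.of C)) : ((φ⁻¹).hom.toFunctor : C ⥤ C) = (φ.inv.toFunctor : C ⥤ C) := rfl
lemma hom_inv (φ : Aut (Cat.of C)) :
    (φ.hom.toFunctor : C ⥤ C) ⋙ (φ.inv.toFunctor : C ⥤ C) = 𝟭 C := congrArg Cat.Hom.toFunctor φ.hom_inv_id
lemma inv_hom_comp (φ : Aut (Cat.of C)) :
    (φ.inv.toFunctor : C ⥤ C) ⋙ (φ.hom.toFunctor : C ⥤ C) = 𝟭 C := congrArg Cat.Hom.toFunctor φ.inv_hom_id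

/-- Inner automorphisms. -/
def IntSub : Subgroup (Aut (Cat.of C)) where
  carrier := {φ | Nonempty ((φ.hom.toFunctor : C ⥤ C) ≅ 𝟭 C)}
  one_mem' := ⟨Iso.refl _⟩
  mul_mem' := by
    rintro φ ψ ⟨i⟩ ⟨j⟩
    exact ⟨Functor.isoWhiskerLeft (ψ.hom.toFunctor : C ⥤ C) i ≪≫ (ψ.hom.toFunctor : C ⥤ C).rightUnitor ≪≫ j⟩
  inv_mem' := by
    rintro φ ⟨i⟩
    exact ⟨((φ.inv.toFunctor : C ⥤ C).leftUnitor).symm ≪≫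
      Functor.isoWhiskerRight i.symm (φ.inv.toFunctor : C ⥤ C) ≪≫ eqToIso (hom_inv φ)⟩

/-- Stable automorphisms. -/
def StSub : Subgroup (Aut (Cat.of C)) where
  carrier := {φ | ∀ A : C, (φ.hom.toFunctor : C ⥤ C).obj A = A}
  one_mem' := fun _ => rfl
  mul_mem' := by
    intro φ ψ hφ hψ A
    show (φ.hom.toFunctor : C ⥤ C).obj ((ψ.hom.toFunctor : C ⥤ C).obj A) = A
    rw [hψ, hφ]
  inv_mem' := by
    intro φ hφ A
    show (φ.inv.toFunctor : C ⥤ C).obj A = A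
    conv_lhs => rw [← hφ A]
    exact Functor.congr_obj (hom_inv φ) A

/-- Equinumerous automorphisms. -/
def EqnSub : Subgroup (Aut (Cat.of C)) where
  carrier := {φ | ∀ A : C, Nonempty ((φ.hom.toFunctor : C ⥤ C).obj A ≅ A)}
  one_mem' := fun _ => ⟨Iso.refl _⟩
  mul_mem' := by
    rintro φ ψ hφ hψ A
    obtain ⟨i⟩ := hψ A
    obtain ⟨j⟩ := hφ ((ψ.hom.toFunctor : C ⥤ C).obj A)
    exact ⟨(show ((φ * ψ).hom.toFunctor : C ⥤ C).obj A = (φ.hom.toFunctor : C ⥤ C).obj ((ψ.hom.toFunctor : C ⥤ C).obj A) from rfl) ▸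
      (j ≪≫ i)⟩
  inv_mem' := by
    rintro φ hφ A
    obtain ⟨i⟩ := hφ ((φ.inv.toFunctor : C ⥤ C).obj A)
    exact ⟨(show ((φ⁻¹).hom.toFunctor : C ⥤ C).obj A = (φ.inv.toFunctor : C ⥤ C).obj A from rfl) ▸
      (i.symm ≪≫ eqToIso (Functor.congr_obj (inv_hom_comp φ) A))⟩

lemma mem_st_iff {φ : Aut (Cat.of C)} :
    φ ∈ (StSub : Subgroup (Aut (Cat.of C))) ↔ ∀ A : C, (φ.hom.toFunctor : C ⥤ C).obj A = A := Iff.rfl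
lemma mem_int_iff {φ : Aut (Cat.of C)} :
    φ ∈ (IntSub : Subgroup (Aut (Cat.of C))) ↔ Nonempty ((φ.hom.toFunctor : C ⥤ C) ≅ 𝟭 C) := Iff.rfl
lemma mem_eqn_iff {φ : Aut (Cat.of C)} :
    φ ∈ (EqnSub : Subgroup (Aut (Cat.of C))) ↔
      ∀ A : C, Nonempty ((φ.hom.toFunctor : C ⥤ C).obj A ≅ A) := Iff.rfl

lemma stsub_le_eqnsub : (StSub : Subgroup (Aut (Cat.of C))) ≤ EqnSub :=
  fun φ hφ => mem_eqn_iff.2 fun A => ⟨eqToIso (mem_st_iff.1 hφ A)⟩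

lemma intsub_le_eqnsub : (IntSub : Subgroup (Aut (Cat.of C))) ≤ EqnSub := by
  intro φ hφ
  obtain ⟨i⟩ := mem_int_iff.1 hφ
  exact mem_eqn_iff.2 fun A => ⟨i.app A⟩

lemma intsub_normal : (IntSub : Subgroup (Aut (Cat.of C))).Normal := by
  constructor
  intro φ hφ g
  obtain ⟨i⟩ := mem_int_iff.1 hφ
  refine mem_int_iff.2 ⟨?_⟩
  show ((g.inv.toFunctor : C ⥤ C) ⋙ (φ.hom.toFunctor : C ⥤ C) ⋙ (g.hom.toFunctor : C ⥤ C)) ≅ 𝟭 C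
  exact Functor.isoWhiskerLeft _ (Functor.isoWhiskerRight i _ ≪≫ (g.hom.toFunctor : C ⥤ C).leftUnitor) ≪≫
    eqToIso (inv_hom_comp g)

lemma stsub_normal : (StSub : Subgroup (Aut (Cat.of C))).Normal := by
  constructor
  intro φ hφ g
  refine mem_st_iff.2 fun A => ?_
  show (g.hom.toFunctor : C ⥤ C).obj ((φ.hom.toFunctor : C ⥤ C).obj ((g.inv.toFunctor : C ⥤ C).obj A)) = A
  erw [mem_st_iff.1 hφ]
  exact Functor.congr_obj (inv_hom_comp g) A

lemma eqnsub_normal : (EqnSub : Subgroup (Aut (Cat.of C))).Normal := by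
  constructor
  intro φ hφ g
  refine mem_eqn_iff.2 fun A => ?_
  obtain ⟨i⟩ := mem_eqn_iff.1 hφ ((g.inv.toFunctor : C ⥤ C).obj A)
  refine ⟨?_⟩
  show (g.hom.toFunctor : C ⥤ C).obj ((φ.hom.toFunctor : C ⥤ C).obj ((g.inv.toFunctor : C ⥤ C).obj A)) ≅ A
  exact (g.hom.toFunctor : C ⥤ C).mapIso i ≪≫ eqToIso (Functor.congr_obj (inv_hom_comp g) A)

end Stmt0Aux

/-- In the group `Aut C` of automorphisms of a category `C`, the inner,
stable, and equinumerous automorphisms form normal subgroups `Int`, `StAut`, `Eqn`,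
with `Int ≤ Eqn` and `StAut ≤ Eqn`. -/
theorem stmt0 (C : Type u) [Category.{v} C] :
    ∃ (Int StAut Eqn : Subgroup (Aut (Cat.of C))),
      Int.Normal ∧ StAut.Normal ∧ Eqn.Normal ∧
      (∀ φ : Aut (Cat.of C), φ ∈ Int ↔ Nonempty ((φ.hom.toFunctor : C ⥤ C) ≅ 𝟭 C)) ∧
      (∀ φ : Aut (Cat.of C), φ ∈ StAut ↔ ∀ A : C, (φ.hom.toFunctor : C ⥤ C).obj A = A) ∧
      (∀ φ : Aut (Cat.of C), φ ∈ Eqn ↔ ∀ A : C, Nonempty ((φ.hom.toFunctor : C ⥤ C).obj A ≅ A)) ∧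
      Int ≤ Eqn ∧ StAut ≤ Eqn := by
  exact ⟨Stmt0Aux.IntSub, Stmt0Aux.StSub, Stmt0Aux.EqnSub,
    Stmt0Aux.intsub_normal, Stmt0Aux.stsub_normal, Stmt0Aux.eqnsub_normal,
    fun _ => Stmt0Aux.mem_int_iff, fun _ => Stmt0Aux.mem_st_iff, fun _ => Stmt0Aux.mem_eqn_iff,
    Stmt0Aux.intsub_le_eqnsub, Stmt0Aux.stsub_le_eqnsub⟩
end

section
/- Let C be a category and φ an equinumerous automorphism of C. Then there exist a stable automorphism φ_S of C and an inner automorphism φ_I of C such that φ = φ_I ∘ φ_S (i.e., φ(f) = φ_I(φ_S(f)) for every morphism f of C). -/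
open CategoryTheory

universe v u

section Aux
variable {C : Type u} [Category.{v} C] (φ : Aut (Cat.of C))

/-- The underlying functor, typed in `C`. -/
abbrev catF (F : Cat.of C ⟶ Cat.of C) : C ⥤ C := F.toFunctor

theorem aux_e1 (A : C) : (catF φ.inv).obj ((catF φ.hom).obj A) = A :=
  congrArg (fun F : Cat.of C ⟶ Cat.of C => (catF F).obj A) φ.hom_inv_id

theorem aux_e2 (A : C) : (catF φ.hom).obj ((catF φ.inv).obj A) = A :=
  congrArg (fun F : Cat.of C ⟶ Cat.of C => (catF F).obj A) φ.inv_hom_id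

variable (η : ∀ A : C, (catF φ.hom).obj A ≅ A)

/-- The inner automorphism: object map `φ.obj`, morphisms conjugated by `η`. -/
def auxF : C ⥤ C where
  obj A := (catF φ.hom).obj A
  map {A B} f := (η A).hom ≫ f ≫ (η B).inv
  map_id A := by simp
  map_comp f g := by simp

/-- Candidate inverse for `auxF`. -/
def auxG : C ⥤ C where
  obj A := (catF φ.inv).obj A
  map {A B} f :=
    ((η ((catF φ.inv).obj A)).symm ≪≫ eqToIso (aux_e2 φ A)).hom ≫ f ≫
    ((η ((catF φ.inv).obj B)).symm ≪≫ eqToIso (aux_e2 φ B)).inv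
  map_id A := by simp
  map_comp f g := by simp

theorem aux_eta_conj {X A : C} (h : X = A) :
    (η X).inv = eqToHom h ≫ (η A).inv ≫ eqToHom (congrArg (catF φ.hom).obj h).symm := by
  subst h; simp

theorem aux_eta_conj' {X A : C} (h : X = A) :
    (η X).hom = eqToHom (congrArg (catF φ.hom).obj h) ≫ (η A).hom ≫ eqToHom h.symm := by
  subst h; simp

theorem auxFG : auxF φ η ⋙ auxG φ η = 𝟭 C := by
  refine CategoryTheory.Functor.ext (F := auxF φ η ⋙ auxG φ η) (G := 𝟭 C) (fun A => aux_e1 φ A) ?_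
  intro A B f
  simp only [Functor.comp_map, auxF, auxG, Iso.trans_hom, Iso.symm_hom, Iso.trans_inv,
    eqToIso.hom, eqToIso.inv, Iso.symm_inv, Functor.id_map]
  rw [aux_eta_conj φ η (aux_e1 φ A), aux_eta_conj' φ η (aux_e1 φ B)]
  simp

theorem auxGF : auxG φ η ⋙ auxF φ η = 𝟭 C := by
  refine CategoryTheory.Functor.ext (F := auxG φ η ⋙ auxF φ η) (G := 𝟭 C) (fun A => aux_e2 φ A) ?_
  intro A B f
  simp only [Functor.comp_map, auxF, auxG, Iso.trans_hom, Iso.symm_hom, Iso.trans_inv,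
    eqToIso.hom, eqToIso.inv, Iso.symm_inv, Functor.id_map]
  simp

end Aux

/-- every equinumerous automorphism `φ` of a category `C` factors as
`φ = φ_I ∘ φ_S` with `φ_S` a stable automorphism and `φ_I` an inner automorphism. -/
theorem stmt1 (C : Type u) [Category.{v} C] (φ : Aut (Cat.of C))
    (hφ : ∀ A : C, Nonempty ((φ.hom.toFunctor : C ⥤ C).obj A ≅ A)) :
    ∃ φS φI : Aut (Cat.of C),
      (∀ A : C, (φS.hom.toFunctor : C ⥤ C).obj A = A) ∧
      Nonempty ((φI.hom.toFunctor : C ⥤ C) ≅ 𝟭 C) ∧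
      (φ.hom.toFunctor : C ⥤ C) = (φS.hom.toFunctor : C ⥤ C) ⋙ (φI.hom.toFunctor : C ⥤ C) := by
  classical
  have η : ∀ A : C, (catF φ.hom).obj A ≅ A := fun A => (hφ A).some
  let φI : Aut (Cat.of C) :=
    { hom := (auxF φ η).toCatHom
      inv := (auxG φ η).toCatHom
      hom_inv_id := Cat.ext (auxFG φ η)
      inv_hom_id := Cat.ext (auxGF φ η) }
  refine ⟨φ ≪≫ φI.symm, φI, ?_, ?_, ?_⟩
  · intro A
    exact aux_e1 φ A
  · exact ⟨NatIso.ofComponents η (by intro A B f; simp [φI, auxF]; erw [Category.assoc, Category.assoc, Iso.inv_hom_id, Category.comp_id]; rfl)⟩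
  · show (φ.hom.toFunctor : C ⥤ C) = ((φ.hom ≫ φI.inv) ≫ φI.hom).toFunctor
    rw [Category.assoc]
    show (φ.hom.toFunctor : C ⥤ C) = (φ.hom ≫ (φI.inv ≫ φI.hom)).toFunctor
    rw [Iso.inv_hom_id, Category.comp_id]
end

section
/- Let R be a ring with invariant basis number, and let φ be an automorphism of the category S_R that fixes every object and satisfies φ(μ_i) = μ_i for every canonical injection μ_i : R → R^n (for all 1 ≤ i ≤ n and all n ∈ ℕ). Then there exists a ring automorphism σ of R such that φ = φ^σ, the skew-inner automorphism determined by σ. -/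
open CategoryTheory

/-- The category `S_R`: objects are the natural numbers, the object `n` standing for the
free left `R`-module `R^n = (Fin n → R)`; morphisms `n ⟶ m` are the `R`-linear maps
`R^n → R^m`.  This is (a presentation of) the full subcategory of left `R`-modules with
objects exactly the modules `R^n`, `n ∈ ℕ`. -/
def SR (R : Type) [Ring R] : Type := ℕ

instance (R : Type) [Ring R] : Category (SR R) where
  Hom n m := (Fin n → R) →ₗ[R] (Fin m → R)
  id _ := LinearMap.id
  comp f g := g.comp f
  id_comp f := LinearMap.comp_id f
  comp_id f := LinearMap.id_comp f
  assoc f g h := (LinearMap.comp_assoc f g h).symm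

variable {R : Type} [Ring R]

/-- The object of `S_R` corresponding to `n ∈ ℕ`, i.e. the module `R^n`. -/
def ob (R : Type) [Ring R] (n : ℕ) : SR R := n

/-- A morphism of `S_R` is just an `R`-linear map. -/
def ofLin {n m : ℕ} (f : (Fin n → R) →ₗ[R] (Fin m → R)) : ob R n ⟶ ob R m := f

/-- The underlying `R`-linear map of a morphism of `S_R`. -/
def toLin {n m : SR R} (f : n ⟶ m) : (Fin n → R) →ₗ[R] (Fin m → R) := f

/-- The canonical injection `μ_i : R = R^1 → R^n` into the `i`-th coordinate,
as a morphism of `S_R`. -/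
def mu (R : Type) [Ring R] (n : ℕ) (i : Fin n) : ob R 1 ⟶ ob R n :=
  ofLin ((LinearMap.single R (fun _ : Fin n => R) i).comp (LinearMap.proj 0))

/-- The skew of an `R`-linear map `f : R^n → R^m` by a ring automorphism `σ` of `R`:
the map `σ_m ∘ f ∘ σ_n⁻¹`, where `σ_k : R^k → R^k` is the coordinatewise application
of `σ`.  It is again `R`-linear. -/
def skewMap (σ : R ≃+* R) {n m : ℕ} (f : (Fin n → R) →ₗ[R] (Fin m → R)) :
    (Fin n → R) →ₗ[R] (Fin m → R) where
  toFun x := fun j => σ (f (fun i => σ.symm (x i)) j)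
  map_add' x y := by
    funext j
    have h : (fun i => σ.symm ((x + y) i)) =
        (fun i => σ.symm (x i)) + (fun i => σ.symm (y i)) := by
      funext i; simp
    show σ (f (fun i => σ.symm ((x + y) i)) j) =
      σ (f (fun i => σ.symm (x i)) j) + σ (f (fun i => σ.symm (y i)) j)
    rw [h, map_add]
    simp
  map_smul' r x := by
    funext j
    have h : (fun i => σ.symm ((r • x) i)) =
        σ.symm r • (fun i => σ.symm (x i)) := by
      funext i; simp [Pi.smul_apply, map_mul]
    show σ (f (fun i => σ.symm ((r • x) i)) j) = ((RingHom.id R) r • fun j' => σ (f (fun i => σ.symm (x i)) j')) j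
    rw [h, map_smul]
    simp [Pi.smul_apply, map_mul]

/-- The skew-inner automorphism `φ^σ` of the category `S_R` determined by a ring
automorphism `σ` of `R`: it fixes all objects and sends `f : R^n → R^m` to
`σ_m ∘ f ∘ σ_n⁻¹`. -/
def skewFunctor (σ : R ≃+* R) : SR R ⥤ SR R where
  obj n := n
  map {n m} f := ofLin (skewMap σ (toLin f))
  map_id n := by
    show ofLin (skewMap σ LinearMap.id) = LinearMap.id
    apply LinearMap.ext
    intro x
    show (fun j => σ (σ.symm (x j))) = x
    funext j; simp
  map_comp {n m k} f g := by
    show ofLin (skewMap σ ((toLin g).comp (toLin f))) =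
      (skewMap σ (toLin g)).comp (skewMap σ (toLin f))
    apply LinearMap.ext
    intro x
    show (fun j => σ ((toLin g) ((toLin f) (fun i => σ.symm (x i))) j)) =
      (fun j => σ ((toLin g) (fun i => σ.symm (σ ((toLin f) (fun i' => σ.symm (x i')) i))) j))
    simp

/-! ### Auxiliary infrastructure -/

instance (n : ℕ) : DecidableEq (Fin (ob R n)) := inferInstanceAs (DecidableEq (Fin n))
instance (n : ℕ) : Finite (Fin (ob R n)) := inferInstanceAs (Finite (Fin n))

instance : OfNat (Fin (ob R 1)) 0 := ⟨(0 : Fin 1)⟩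
instance : Subsingleton (Fin (ob R 1)) := ⟨fun a b => Subsingleton.elim (α := Fin 1) a b⟩
instance : OfNat (Fin (ob R 2)) 0 := ⟨(0 : Fin 2)⟩
instance : OfNat (Fin (ob R 2)) 1 := ⟨(1 : Fin 2)⟩

lemma SR.homext {n m : SR R} {f g : n ⟶ m} (h : ∀ x, toLin f x = toLin g x) : f = g :=
  LinearMap.ext h

lemma toLin_comp {n m k : SR R} (f : n ⟶ m) (g : m ⟶ k) (x : Fin n → R) :
    toLin (f ≫ g) x = toLin g (toLin f x) := rfl

lemma toLin_id {n : SR R} (x : Fin n → R) : toLin (𝟙 n) x = x := rfl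

lemma toLin_mu (n : ℕ) (i : Fin n) (x : Fin (ob R 1) → R) :
    toLin (mu R n i) x = Pi.single i (x 0) := rfl

/-- The projection `π_j : R^n → R = R^1`. -/
def prj (n : ℕ) (j : Fin n) : ob R n ⟶ ob R 1 :=
  ofLin ((LinearMap.single R (fun _ : Fin 1 => R) 0).comp (LinearMap.proj j))

lemma toLin_prj (n : ℕ) (j : Fin n) (x : Fin (ob R n) → R) :
    toLin (prj n j) x = fun _ => x j := by
  have h : toLin (prj n j) x = Pi.single (0 : Fin 1) (x j) :=
    LinearMap.single_apply R (fun _ : Fin 1 => R) (x j)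
  rw [h]
  funext k
  rw [Subsingleton.elim (α := Fin 1) k 0, Pi.single_eq_same]

/-- Right multiplication by `r`, as an endomorphism of `R^1`. -/
def rho (r : R) : ob R 1 ⟶ ob R 1 :=
  ofLin
  { toFun := fun x => fun _ => x 0 * r
    map_add' := fun x y => by funext k; simp [add_mul]
    map_smul' := fun c x => by funext k; simp [mul_assoc] }

lemma toLin_rho (r : R) (x : Fin (ob R 1) → R) : toLin (rho r) x = fun _ => x 0 * r := rfl

lemma rho_inj {r s : R} (h : rho (R := R) r = rho s) : r = s := by
  have := congrFun (congrArg (fun f => toLin f (fun _ => (1 : R))) h) 0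
  simpa [toLin_rho] using this

lemma rho_comp (r s : R) : rho (R := R) r ≫ rho s = rho (r * s) :=
  SR.homext fun x => by
    funext k; simp [toLin_comp, toLin_rho, mul_assoc]

lemma rho_one : rho (R := R) 1 = 𝟙 (ob R 1) :=
  SR.homext fun x => by
    funext k; rw [Subsingleton.elim k 0]; simp [toLin_rho, toLin_id]

lemma endo_eq_rho (f : ob R 1 ⟶ ob R 1) : f = rho (toLin f (fun _ => 1) 0) := by
  apply SR.homext
  intro x
  have hx : x = x 0 • (fun _ => (1 : R)) := by
    funext k; rw [Subsingleton.elim k 0]; simp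
  rw [toLin_rho]
  conv_lhs => rw [hx]
  rw [map_smul]
  funext k
  rw [Subsingleton.elim k 0]
  simp

/-- The zero morphism. -/
def zmor (n m : ℕ) : ob R n ⟶ ob R m := ofLin 0

lemma toLin_zmor (n m : ℕ) (x : Fin (ob R n) → R) : toLin (zmor n m) x = 0 := rfl

instance (n : ℕ) : Subsingleton (ob R n ⟶ ob R 0) :=
  (inferInstance : Subsingleton ((Fin n → R) →ₗ[R] (Fin 0 → R)))

instance (n : ℕ) : Subsingleton (ob R 0 ⟶ ob R n) :=
  (inferInstance : Subsingleton ((Fin 0 → R) →ₗ[R] (Fin n → R)))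

lemma zmor_factor (n m : ℕ) : zmor (R := R) n m = zmor n 0 ≫ zmor 0 m :=
  SR.homext fun x => by
    rfl

lemma mu_comp_prj_same (n : ℕ) (i : Fin n) : mu R n i ≫ prj n i = 𝟙 (ob R 1) :=
  SR.homext fun x => by
    erw [toLin_comp, toLin_mu, toLin_prj, toLin_id]
    funext k; rw [Subsingleton.elim k 0]; simp

lemma mu_comp_prj_ne (n : ℕ) (i j : Fin n) (h : i ≠ j) :
    mu R n i ≫ prj n j = zmor 1 1 :=
  SR.homext fun x => by
    erw [toLin_comp, toLin_mu, toLin_prj, toLin_zmor]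
    funext k
    simp [Pi.single_apply, (Ne.symm h)]

lemma homext_from {n m : ℕ} {f g : ob R n ⟶ ob R m}
    (h : ∀ i : Fin n, mu R n i ≫ f = mu R n i ≫ g) : f = g := by
  apply LinearMap.pi_ext (f := toLin f) (g := toLin g)
  intro i x
  have h2 := congrArg (fun u => toLin u (fun _ : Fin 1 => x)) (h i)
  exact h2

lemma homext_to {n m : ℕ} {f g : ob R n ⟶ ob R m}
    (h : ∀ j : Fin m, f ≫ prj m j = g ≫ prj m j) : f = g := by
  apply SR.homext
  intro x
  funext j
  have h2 := congrFun (congrArg (fun u => toLin u x) (h j)) 0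
  exact h2

/-- The map `R → R²`, `x ↦ (x r, x s)`. -/
def pairMap (r s : R) : ob R 1 ⟶ ob R 2 :=
  ofLin
  { toFun := fun x => fun j => x 0 * (if j = 0 then r else s)
    map_add' := fun x y => by funext j; by_cases h : j = 0 <;> simp [h, add_mul]
    map_smul' := fun c x => by funext j; simp [mul_assoc] }

lemma toLin_pairMap (r s : R) (x : Fin (ob R 1) → R) :
    toLin (pairMap r s) x = fun j => x 0 * (if j = 0 then r else s) := rfl

/-- The codiagonal `R² → R`, `(a, b) ↦ a + b`. -/
def nabla : ob R 2 ⟶ ob R 1 :=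
  ofLin
  { toFun := fun x => fun _ => x 0 + x 1
    map_add' := fun x y => by
      funext k
      show (x + y) 0 + (x + y) 1 = (x 0 + x 1) + (y 0 + y 1)
      simp [add_add_add_comm]
    map_smul' := fun c x => by
      funext k
      show (c • x) 0 + (c • x) 1 = c * (x 0 + x 1)
      simp [mul_add] }

lemma toLin_nabla (x : Fin (ob R 2) → R) : toLin (nabla (R := R)) x = fun _ => x 0 + x 1 := rfl

lemma mu_comp_nabla (i : Fin 2) : mu R 2 i ≫ nabla = 𝟙 (ob R 1) :=
  SR.homext fun x => by
    erw [toLin_comp, toLin_mu, toLin_nabla, toLin_id]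
    funext k
    rw [Subsingleton.elim (α := Fin 1) k 0]
    fin_cases i <;> [exact add_zero (x 0); exact zero_add (x 0)]

lemma pairMap_comp_nabla (r s : R) : pairMap r s ≫ nabla = rho (r + s) :=
  SR.homext fun x => by
    rw [toLin_comp, toLin_pairMap, toLin_nabla, toLin_rho]
    funext k
    simp [mul_add]

lemma pairMap_comp_prj (r s : R) (j : Fin 2) :
    pairMap r s ≫ prj 2 j = rho (if j = 0 then r else s) :=
  SR.homext fun x => by
    rw [toLin_comp, toLin_pairMap, toLin_prj, toLin_rho]
    rfl

/-- The `(i,j)` entry of a morphism, extracted categorically. -/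
lemma entry_eq {n m : ℕ} (f : ob R n ⟶ ob R m) (i : Fin n) (j : Fin m) :
    mu R n i ≫ f ≫ prj m j = rho (toLin f (Pi.single i 1) j) :=
  SR.homext fun x => by
    rw [toLin_comp, toLin_comp, toLin_mu, toLin_prj, toLin_rho]
    have hx : Pi.single i (x 0) = x 0 • (Pi.single i (1 : R) : Fin n → R) := by
      funext t
      simp [Pi.single_apply, mul_ite]
    erw [hx, map_smul]
    funext k
    rfl

/-- The skew of a morphism, with `ℕ`-indexed source and target. -/
def skewHom (σ : R ≃+* R) {n m : ℕ} (f : ob R n ⟶ ob R m) : ob R n ⟶ ob R m :=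
  ofLin (skewMap σ (toLin f))

lemma skew_single (σ : R ≃+* R) {n m : ℕ} (f : ob R n ⟶ ob R m) (i : Fin n) (j : Fin m) :
    toLin (skewHom σ f) (Pi.single i 1) j
      = σ (toLin f (Pi.single i 1) j) := by
  have h : (fun t => σ.symm ((Pi.single i (1 : R) : Fin n → R) t))
      = (Pi.single i (1 : R) : Fin n → R) := by
    funext t
    simp [Pi.single_apply, apply_ite σ.symm]
  exact congrArg (fun v => σ (toLin f v j)) h

section PAbstract

variable (P : ∀ n m : ℕ, (ob R n ⟶ ob R m) → (ob R n ⟶ ob R m))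

/-- The function `R → R` extracted from an endofunctor-like operation on `S_R`. -/
def sigmaOf (r : R) : R := toLin (P 1 1 (rho r)) (fun _ => 1) 0

lemma P_rho (r : R) : P 1 1 (rho r) = rho (sigmaOf P r) := endo_eq_rho _

variable
  (hid : ∀ n : ℕ, P n n (𝟙 (ob R n)) = 𝟙 (ob R n))
  (hcomp : ∀ (n m k : ℕ) (f : ob R n ⟶ ob R m) (g : ob R m ⟶ ob R k),
    P n k (f ≫ g) = P n m f ≫ P m k g)
  (hPmu : ∀ (n : ℕ) (i : Fin n), P 1 n (mu R n i) = mu R n i)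

include hcomp in
lemma P_zero (n m : ℕ) : P n m (zmor n m) = zmor n m := by
  rw [zmor_factor, hcomp,
    Subsingleton.elim (P n 0 (zmor n 0)) (zmor n 0),
    Subsingleton.elim (P 0 m (zmor 0 m)) (zmor 0 m), ← zmor_factor]

include hid hcomp hPmu in
lemma P_prj (n : ℕ) (j : Fin n) : P n 1 (prj n j) = prj n j := by
  apply homext_from
  intro i
  conv_lhs => rw [← hPmu n i, ← hcomp]
  by_cases h : i = j
  · subst h
    rw [mu_comp_prj_same, hid]
  · rw [mu_comp_prj_ne n i j h, P_zero P hcomp]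

include hid hcomp hPmu in
lemma P_nabla : P 2 1 nabla = (nabla : ob R 2 ⟶ ob R 1) := by
  apply homext_from
  intro i
  conv_lhs => rw [← hPmu 2 i, ← hcomp]
  rw [mu_comp_nabla, hid]

include hid hcomp hPmu in
lemma P_pairMap (r s : R) :
    P 1 2 (pairMap r s) = pairMap (sigmaOf P r) (sigmaOf P s) := by
  apply homext_to
  intro j
  conv_lhs => rw [← P_prj P hid hcomp hPmu 2 j, ← hcomp]
  rw [pairMap_comp_prj, pairMap_comp_prj, P_rho P]
  by_cases h : j = 0 <;> simp [h]

include hid hcomp hPmu in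
lemma sigmaOf_add (r s : R) : sigmaOf P (r + s) = sigmaOf P r + sigmaOf P s := by
  apply rho_inj
  rw [← P_rho P, ← pairMap_comp_nabla, hcomp, P_pairMap P hid hcomp hPmu,
    P_nabla P hid hcomp hPmu, pairMap_comp_nabla]

include hcomp in
lemma sigmaOf_mul (r s : R) : sigmaOf P (r * s) = sigmaOf P r * sigmaOf P s := by
  apply rho_inj
  rw [← P_rho P, ← rho_comp, hcomp, P_rho P, P_rho P, rho_comp]

include hid in
lemma sigmaOf_one : sigmaOf P (1 : R) = 1 := by
  apply rho_inj
  rw [← P_rho P, rho_one, hid]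

include hid hcomp hPmu in
lemma P_eq_skew (σ : R ≃+* R) (hσ : ∀ r, σ r = sigmaOf P r) (n m : ℕ)
    (f : ob R n ⟶ ob R m) : P n m f = skewHom σ f := by
  apply homext_from
  intro i
  apply homext_to
  intro j
  rw [Category.assoc, Category.assoc]
  conv_lhs => rw [← hPmu n i, ← P_prj P hid hcomp hPmu m j, ← hcomp, ← hcomp]
  rw [entry_eq, P_rho P]
  conv_rhs => rw [entry_eq (skewHom σ f) i j]
  rw [skew_single σ f i j, hσ]

end PAbstract

lemma sigmaOf_leftInv (P Q : ∀ n m : ℕ, (ob R n ⟶ ob R m) → (ob R n ⟶ ob R m))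
    (hQP : ∀ f : ob R 1 ⟶ ob R 1, Q 1 1 (P 1 1 f) = f) (r : R) :
    sigmaOf Q (sigmaOf P r) = r := by
  apply rho_inj
  rw [← P_rho Q, ← P_rho P, hQP]

/-- Conjugation of an object-fixing functor by the `eqToHom`s, yielding an operation
on hom-sets with fixed (co)domains. -/
def conj (F : SR R ⥤ SR R) (hF : ∀ A : SR R, F.obj A = A) (n m : ℕ)
    (f : ob R n ⟶ ob R m) : ob R n ⟶ ob R m :=
  eqToHom (hF (ob R n)).symm ≫ F.map f ≫ eqToHom (hF (ob R m))

open CategoryTheory in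
lemma conj_id (F : SR R ⥤ SR R) (hF : ∀ A : SR R, F.obj A = A) (n : ℕ) :
    conj F hF n n (𝟙 (ob R n)) = 𝟙 (ob R n) := by
  unfold conj
  rw [F.map_id]
  simp [eqToHom_trans]

open CategoryTheory in
lemma conj_comp (F : SR R ⥤ SR R) (hF : ∀ A : SR R, F.obj A = A)
    (n m k : ℕ) (f : ob R n ⟶ ob R m) (g : ob R m ⟶ ob R k) :
    conj F hF n k (f ≫ g) = conj F hF n m f ≫ conj F hF m k g := by
  unfold conj
  rw [F.map_comp]
  simp [Category.assoc, eqToHom_trans, eqToHom_refl]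

open CategoryTheory in
lemma conj_conj (F G : SR R ⥤ SR R) (hF : ∀ A : SR R, F.obj A = A)
    (hG : ∀ A : SR R, G.obj A = A) (hFG : F ⋙ G = Functor.id (SR R))
    (n m : ℕ) (f : ob R n ⟶ ob R m) :
    conj G hG n m (conj F hF n m (f)) = f := by
  have h2 : G.map (F.map f) =
      eqToHom (Functor.congr_obj hFG (ob R n)) ≫ f ≫
        eqToHom (Functor.congr_obj hFG (ob R m)).symm :=
    Functor.congr_hom hFG f
  unfold conj
  rw [G.map_comp, G.map_comp, eqToHom_map, eqToHom_map, h2]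
  simp [Category.assoc, eqToHom_trans, eqToHom_refl]

lemma eqToHom_sandwich {C : Type*} [Category C] {A A' B B' : C} (a : A ⟶ B) (e1 : A = A')
    (e2 : A' = A) (e3 : B = B') (e4 : B' = B) :
    a = eqToHom e1 ≫ (eqToHom e2 ≫ a ≫ eqToHom e3) ≫ eqToHom e4 := by
  subst e1 e3; simp

open CategoryTheory in
/-- Main abstract statement: an invertible object-fixing endofunctor of `S_R` fixing
all `μ_i` is a skew-inner automorphism. -/
lemma main_abstract (F G : SR R ⥤ SR R) (hF : ∀ A : SR R, F.obj A = A)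
    (hG : ∀ A : SR R, G.obj A = A)
    (hFG : F ⋙ G = Functor.id (SR R)) (hGF : G ⋙ F = Functor.id (SR R))
    (hmu : ∀ (n : ℕ) (i : Fin n),
      F.map (mu R n i) = eqToHom (hF (ob R 1)) ≫ mu R n i ≫ eqToHom (hF (ob R n)).symm) :
    ∃ σ : R ≃+* R, F = skewFunctor σ := by
  set P := conj F hF with hP
  set Q := conj G hG with hQ
  have hPid : ∀ n : ℕ, P n n (𝟙 (ob R n)) = 𝟙 (ob R n) := conj_id F hF
  have hPcomp := conj_comp F hF
  have hQP : ∀ (n m : ℕ) (f : ob R n ⟶ ob R m), Q n m (P n m f) = f := conj_conj F G hF hG hFG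
  have hPQ : ∀ (n m : ℕ) (f : ob R n ⟶ ob R m), P n m (Q n m f) = f := conj_conj G F hG hF hGF
  have hPmu : ∀ (n : ℕ) (i : Fin n), P 1 n (mu R n i) = mu R n i := by
    intro n i
    rw [hP]
    unfold conj
    rw [hmu]
    simp [Category.assoc, eqToHom_trans, eqToHom_refl]
  -- the ring automorphism
  refine ⟨⟨⟨sigmaOf P, sigmaOf Q, sigmaOf_leftInv P Q (hQP 1 1), sigmaOf_leftInv Q P (hPQ 1 1)⟩,
      sigmaOf_mul P hPcomp, sigmaOf_add P hPid hPcomp hPmu⟩, ?_⟩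
  set σ : R ≃+* R := ⟨⟨sigmaOf P, sigmaOf Q, sigmaOf_leftInv P Q (hQP 1 1), sigmaOf_leftInv Q P (hPQ 1 1)⟩,
      sigmaOf_mul P hPcomp, sigmaOf_add P hPid hPcomp hPmu⟩ with hσ
  have hskew : ∀ (n m : ℕ) (f : ob R n ⟶ ob R m), P n m f = skewHom σ f :=
    P_eq_skew P hPid hPcomp hPmu σ (fun r => rfl)
  refine CategoryTheory.Functor.ext (fun X => hF X) ?_
  intro X Y f
  show F.map f = eqToHom (hF X) ≫ (skewFunctor σ).map f ≫ eqToHom (hF Y).symm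
  have h3 := hskew X Y f
  rw [hP] at h3
  unfold conj at h3
  have h4 : (skewFunctor σ).map f = skewHom σ f := rfl
  rw [h4, ← h3]
  exact eqToHom_sandwich _ _ _ _ _

/-- if `R` is a ring with invariant basis number and `φ` is an automorphism
of the category `S_R` fixing every object and every canonical injection
`μ_i : R → R^n`, then `φ = φ^σ` for some ring automorphism `σ` of `R`. -/
theorem stmt3 (R : Type) [Ring R]
    (hIBN : ∀ n m : ℕ, Nonempty ((Fin n → R) ≃ₗ[R] (Fin m → R)) → n = m)
    (φ : Aut (Cat.of (SR R)))
    (hobj : ∀ A : SR R, (φ.hom.toFunctor : SR R ⥤ SR R).obj A = A)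
    (hmu : ∀ (n : ℕ) (i : Fin n),
      (φ.hom.toFunctor : SR R ⥤ SR R).map (mu R n i) =
        eqToHom (hobj (ob R 1)) ≫ mu R n i ≫ eqToHom (hobj (ob R n)).symm) :
    ∃ σ : R ≃+* R, (φ.hom.toFunctor : SR R ⥤ SR R) = skewFunctor σ := by
  have hFG : (φ.hom.toFunctor : SR R ⥤ SR R) ⋙ (φ.inv.toFunctor : SR R ⥤ SR R) = Functor.id (SR R) :=
    congrArg Cat.Hom.toFunctor φ.hom_inv_id
  have hGF : (φ.inv.toFunctor : SR R ⥤ SR R) ⋙ (φ.hom.toFunctor : SR R ⥤ SR R) = Functor.id (SR R) :=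
    congrArg Cat.Hom.toFunctor φ.inv_hom_id
  have hG : ∀ A : SR R, (φ.inv.toFunctor : SR R ⥤ SR R).obj A = A := by
    intro A
    have h1 : (φ.inv.toFunctor : SR R ⥤ SR R).obj ((φ.hom.toFunctor : SR R ⥤ SR R).obj A) = A :=
      Functor.congr_obj hFG A
    rw [hobj A] at h1
    exact h1
  exact main_abstract _ _ hobj hG hFG hGF hmu
end

section
/- Let R be a ring with invariant basis number. Then every automorphism of the category C_R of finitely generated free left R-modules is semi-inner. -/
open CategoryTheory

/-- The category `C_R`: the full subcategory of the category of left `R`-modules whose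
objects are the finitely generated free left `R`-modules. -/
def CR (R : Type) [Ring R] : Type 1 :=
  ObjectProperty.FullSubcategory (fun M : ModuleCat.{0} R => Module.Finite R M ∧ Module.Free R M)

instance (R : Type) [Ring R] : Category (CR R) :=
  ObjectProperty.FullSubcategory.category _

/-- A morphism of `C_R` is just an `R`-linear map. -/
def homToLin {R : Type} [Ring R] {F G : CR R} (f : F ⟶ G) : F.obj →ₗ[R] G.obj := f.hom.hom

/-- An automorphism `φ` of the category `C_R` is *semi-inner* if there are a ring
automorphism `σ` of `R` and additive isomorphisms `s_F : F ≃+ φ(F)`, one for each object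
`F` of `C_R`, with `s_F (r • a) = σ r • s_F a`, such that `φ(f) ∘ s_F = s_G ∘ f` for
every `R`-linear map `f : F ⟶ G`. -/
def SemiInner (R : Type) [Ring R] (φ : Aut (Cat.of (CR R))) : Prop :=
  ∃ (σ : R ≃+* R)
    (s : ∀ F : CR R, F.obj ≃+ ((φ.hom.toFunctor : CR R ⥤ CR R).obj F).obj),
    (∀ (F : CR R) (r : R) (a : F.obj), s F (r • a) = σ r • s F a) ∧
    (∀ (F G : CR R) (f : F ⟶ G) (a : F.obj),
      homToLin ((φ.hom.toFunctor : CR R ⥤ CR R).map f) (s F a) = s G (homToLin f a))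

namespace Stmt7Aux

open CategoryTheory.Limits

variable {R : Type} [Ring R]

instance : Preadditive (CR R) :=
  inferInstanceAs (Preadditive (ObjectProperty.FullSubcategory _))

instance (F : CR R) : Module.Finite R F.obj := F.property.1
instance (F : CR R) : Module.Free R F.obj := F.property.2

/-- Turn a linear map into a morphism of `CR R`. -/
def lin {F G : CR R} (f : F.obj →ₗ[R] G.obj) : F ⟶ G := ObjectProperty.homMk (ModuleCat.ofHom f)

lemma hom_ext {F G : CR R} {f g : F ⟶ G} (h : ∀ x, homToLin f x = homToLin g x) :
    f = g := ObjectProperty.hom_ext _ (ModuleCat.hom_ext (LinearMap.ext h))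

lemma comp_apply' {F G H : CR R} (f : F ⟶ G) (g : G ⟶ H) (x : F.obj) :
    homToLin (f ≫ g) x = homToLin g (homToLin f x) := rfl

lemma add_apply' {F G : CR R} (f g : F ⟶ G) (x : F.obj) :
    homToLin (f + g) x = homToLin f x + homToLin g x := rfl

lemma id_apply' {F : CR R} (x : F.obj) : homToLin (𝟙 F) x = x := rfl

/-- The standard free module of rank `n` as an object of `CR R`. -/
def Rn (R : Type) [Ring R] (n : ℕ) : CR R :=
  ⟨ModuleCat.of R (Fin n → R), inferInstanceAs (Module.Finite R (Fin n → R)),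
    inferInstanceAs (Module.Free R (Fin n → R))⟩

/-- The "direct sum" object. -/
def bp (F G : CR R) : CR R :=
  ⟨ModuleCat.of R (F.obj × G.obj), inferInstanceAs (Module.Finite R (F.obj × G.obj)),
    inferInstanceAs (Module.Free R (F.obj × G.obj))⟩

/-- The evident binary bicone on `F G`. -/
def bic (F G : CR R) : BinaryBicone F G where
  pt := bp F G
  fst := lin (LinearMap.fst R F.obj G.obj)
  snd := lin (LinearMap.snd R F.obj G.obj)
  inl := lin (LinearMap.inl R F.obj G.obj)
  inr := lin (LinearMap.inr R F.obj G.obj)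
  inl_fst := hom_ext fun x => rfl
  inl_snd := hom_ext fun x => rfl
  inr_fst := hom_ext fun x => rfl
  inr_snd := hom_ext fun x => rfl

lemma bic_total (F G : CR R) :
    (bic F G).fst ≫ (bic F G).inl + (bic F G).snd ≫ (bic F G).inr = 𝟙 (bic F G).pt := by
  refine hom_ext fun x => ?_
  rw [add_apply', comp_apply', comp_apply', id_apply']
  exact Prod.ext (add_zero _) (zero_add _)

/-- The bilimit structure on `bic F G`. -/
noncomputable def bicIsBilimit (F G : CR R) : (bic F G).IsBilimit :=
  isBinaryBilimitOfTotal _ (bic_total F G)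

instance : HasBinaryBiproducts (CR R) where
  has_binary_biproduct F G := HasBinaryBiproduct.mk ⟨bic F G, bicIsBilimit F G⟩

lemma exists_rk (F : CR R) : ∃ n : ℕ, Nonempty (F.obj ≃ₗ[R] (Fin n → R)) := by
  let b := Module.Free.chooseBasis R F.obj
  exact ⟨Fintype.card (Module.Free.ChooseBasisIndex R F.obj),
    ⟨(b.reindex (Fintype.equivFin _)).equivFun⟩⟩

/-- The rank of an object of `CR R`. -/
noncomputable def rk (F : CR R) : ℕ := (exists_rk F).choose

lemma rk_spec (F : CR R) : Nonempty (F.obj ≃ₗ[R] (Fin (rk F) → R)) :=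
  (exists_rk F).choose_spec

lemma rk_eq (hIBN : ∀ n m : ℕ, Nonempty ((Fin n → R) ≃ₗ[R] (Fin m → R)) → n = m) {F : CR R} {n : ℕ} (h : Nonempty (F.obj ≃ₗ[R] (Fin n → R))) :
    rk F = n :=
  hIBN _ _ ⟨(rk_spec F).some.symm.trans h.some⟩

/-- A linear equivalence of underlying modules gives an isomorphism in `CR R`. -/
def isoOfLinearEquiv {F G : CR R} (e : F.obj ≃ₗ[R] G.obj) : F ≅ G where
  hom := lin e.toLinearMap
  inv := lin e.symm.toLinearMap
  hom_inv_id := hom_ext fun x => e.symm_apply_apply x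
  inv_hom_id := hom_ext fun x => e.apply_symm_apply x

/-- An isomorphism in `CR R` gives a linear equivalence. -/
def linearEquivOfIso {F G : CR R} (i : F ≅ G) : F.obj ≃ₗ[R] G.obj :=
  LinearEquiv.ofLinear (homToLin i.hom) (homToLin i.inv)
    (LinearMap.ext fun x => congrArg (fun (f : G ⟶ G) => homToLin f x) i.inv_hom_id)
    (LinearMap.ext fun x => congrArg (fun (f : F ⟶ F) => homToLin f x) i.hom_inv_id)

lemma rk_congr (hIBN : ∀ n m : ℕ, Nonempty ((Fin n → R) ≃ₗ[R] (Fin m → R)) → n = m) {F G : CR R} (i : F ≅ G) : rk F = rk G :=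
  rk_eq hIBN ⟨(linearEquivOfIso i).trans (rk_spec G).some⟩

lemma rk_Rn (hIBN : ∀ n m : ℕ, Nonempty ((Fin n → R) ≃ₗ[R] (Fin m → R)) → n = m) (n : ℕ) : rk (Rn R n) = n := rk_eq hIBN ⟨LinearEquiv.refl _ _⟩

/-- The linear equivalence `(F × G) ≃ R^(rk F + rk G)`. -/
noncomputable def bpEquiv (F G : CR R) :
    (bp F G).obj ≃ₗ[R] (Fin (rk F + rk G) → R) :=
  ((rk_spec F).some.prodCongr (rk_spec G).some).trans
    (((LinearEquiv.sumArrowLequivProdArrow (Fin (rk F)) (Fin (rk G)) R R).symm).trans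
      (LinearEquiv.funCongrLeft R R finSumFinEquiv.symm))

lemma rk_bp (hIBN : ∀ n m : ℕ, Nonempty ((Fin n → R) ≃ₗ[R] (Fin m → R)) → n = m) (F G : CR R) : rk (bp F G) = rk F + rk G :=
  rk_eq hIBN ⟨bpEquiv F G⟩

/-- `R^(n+m) ≅ R^n ⊕ R^m` in `CR R`. -/
noncomputable def RnAddIso (n m : ℕ) : Rn R (n + m) ≅ bp (Rn R n) (Rn R m) :=
  isoOfLinearEquiv <|
    (LinearEquiv.funCongrLeft R R (finSumFinEquiv : Fin n ⊕ Fin m ≃ Fin (n + m))).trans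
      (LinearEquiv.sumArrowLequivProdArrow (Fin n) (Fin m) R R)

section Phi

variable (Φ : CR R ⥤ CR R) [Φ.Full]

/-- The image of `bp F G` under a product-preserving functor is `bp (Φ F) (Φ G)`. -/
noncomputable def mapBpIso [PreservesLimitsOfShape (Discrete WalkingPair) Φ] (F G : CR R) :
    Φ.obj (bp F G) ≅ bp (Φ.obj F) (Φ.obj G) := by
  haveI : PreservesBinaryBiproduct F G Φ := preservesBinaryBiproduct_of_preservesBinaryProduct Φ
  exact IsLimit.conePointUniqueUpToIso
    ((PreservesBinaryBiproduct.preserves (bicIsBilimit F G)).some.isLimit :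
      IsLimit (Φ.mapBinaryBicone (bic F G)).toCone)
    (bicIsBilimit (Φ.obj F) (Φ.obj G)).isLimit

lemma rk_map_add (hIBN : ∀ n m : ℕ, Nonempty ((Fin n → R) ≃ₗ[R] (Fin m → R)) → n = m)
    [PreservesLimitsOfShape (Discrete WalkingPair) Φ] (n m : ℕ) :
    rk (Φ.obj (Rn R (n + m))) = rk (Φ.obj (Rn R n)) + rk (Φ.obj (Rn R m)) := by
  rw [rk_congr hIBN (Φ.mapIso (RnAddIso n m) ≪≫ mapBpIso Φ (Rn R n) (Rn R m))]
  exact rk_bp hIBN _ _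

lemma rk_map_mul (hIBN : ∀ n m : ℕ, Nonempty ((Fin n → R) ≃ₗ[R] (Fin m → R)) → n = m)
    [PreservesLimitsOfShape (Discrete WalkingPair) Φ] (n : ℕ) :
    rk (Φ.obj (Rn R n)) = n * rk (Φ.obj (Rn R 1)) := by
  induction n with
  | zero =>
      have h := rk_map_add Φ hIBN 0 0
      simp only [Nat.add_zero] at h
      omega
  | succ n ih =>
      have h := rk_map_add Φ hIBN n 1
      rw [ih] at h
      rw [h]
      ring

end Phi

section Main

variable (Φ : CR R ⥤ CR R) [Φ.Additive] (u : Rn R 1 ≅ Φ.obj (Rn R 1))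

/-- The canonical generator of `R^1`. -/
def e₁ : (Rn R 1).obj := fun _ => (1 : R)

/-- The morphism `R^1 ⟶ F` sending `e₁` to `a`. -/
def fa {F : CR R} (a : F.obj) : Rn R 1 ⟶ F :=
  lin
    { toFun := fun x => x 0 • a
      map_add' := fun x y => by
        show (x 0 + y 0) • a = x 0 • a + y 0 • a
        rw [add_smul]
      map_smul' := fun r x => by
        show (r * x 0) • a = r • x 0 • a
        rw [mul_smul] }

lemma fa_apply {F : CR R} (a : F.obj) (x : (Rn R 1).obj) :
    homToLin (fa a) x = x 0 • a := rfl

lemma eq_smul_e₁ (x : (Rn R 1).obj) : x = x 0 • e₁ := by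
  funext i
  have : i = 0 := Subsingleton.elim i 0
  subst this
  show x 0 = x 0 * 1
  rw [mul_one]

lemma fa_e₁ {F : CR R} (a : F.obj) : homToLin (fa a) e₁ = a := by
  rw [fa_apply]
  show (1 : R) • a = a
  rw [one_smul]

lemma fa_eval {F : CR R} (g : Rn R 1 ⟶ F) : fa (homToLin g e₁) = g := by
  refine hom_ext fun x => ?_
  rw [fa_apply, ← map_smul (homToLin g), ← eq_smul_e₁]

/-- Evaluation at `e₁` as an equivalence. -/
def evEquiv (F : CR R) : (Rn R 1 ⟶ F) ≃ F.obj where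
  toFun g := homToLin g e₁
  invFun := fa
  left_inv := fa_eval
  right_inv := fa_e₁

variable [Φ.Full] [Φ.Faithful]

/-- The distinguished element of `Φ (R^1)`. -/
def u1 : (Φ.obj (Rn R 1)).obj := homToLin u.hom e₁

/-- Evaluation at `u1` as an equivalence. -/
def evEquiv' (F : CR R) : (Φ.obj (Rn R 1) ⟶ Φ.obj F) ≃ (Φ.obj F).obj :=
  (Iso.homCongr u (Iso.refl (Φ.obj F))).symm.trans (evEquiv (Φ.obj F))

lemma evEquiv'_apply (F : CR R) (g : Φ.obj (Rn R 1) ⟶ Φ.obj F) :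
    evEquiv' Φ u F g = homToLin g (u1 Φ u) := by
  show homToLin (u.hom ≫ g ≫ 𝟙 (Φ.obj F)) e₁ = homToLin g (u1 Φ u)
  rw [Category.comp_id, comp_apply']
  rfl

/-- The underlying equivalence of `s_F`. -/
noncomputable def sEquiv (F : CR R) : F.obj ≃ (Φ.obj F).obj :=
  ((evEquiv F).symm.trans
    (Equiv.ofBijective (Φ.map (X := Rn R 1) (Y := F))
      ⟨fun _ _ h => Φ.map_injective h, Φ.map_surjective⟩)).trans (evEquiv' Φ u F)

lemma sEquiv_apply (F : CR R) (a : F.obj) :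
    sEquiv Φ u F a = homToLin (Φ.map (fa a)) (u1 Φ u) := by
  show evEquiv' Φ u F (Φ.map ((evEquiv F).symm a)) = _
  rw [evEquiv'_apply]
  rfl

/-- `s_F` as an additive equivalence. -/
noncomputable def S (F : CR R) : F.obj ≃+ (Φ.obj F).obj :=
  AddEquiv.mk' (sEquiv Φ u F) (by
    intro a b
    rw [sEquiv_apply, sEquiv_apply, sEquiv_apply]
    have hfa : fa (a + b) = fa a + fa b := hom_ext fun x => by
      rw [fa_apply, add_apply', fa_apply, fa_apply, smul_add]
    rw [hfa, Φ.map_add, add_apply'])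

lemma S_apply (F : CR R) (a : F.obj) :
    S Φ u F a = homToLin (Φ.map (fa a)) (u1 Φ u) := sEquiv_apply Φ u F a

/-- Right multiplication by `r` as an endomorphism of `R^1`. -/
def ρ (r : R) : Rn R 1 ⟶ Rn R 1 :=
  lin
    { toFun := fun x i => x i * r
      map_add' := fun x y => by funext i; exact add_mul _ _ _
      map_smul' := fun c x => by funext i; exact (mul_assoc c (x i) r) }

lemma ρ_apply (r : R) (x : (Rn R 1).obj) (i : Fin 1) : homToLin (ρ r) x i = x i * r := rfl

lemma fa_smul_e₁ (r : R) : fa (r • e₁) = ρ r := by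
  refine hom_ext fun x => ?_
  funext i
  rw [fa_apply, ρ_apply]
  show x 0 * (r * 1) = x i * r
  have : i = 0 := Subsingleton.elim i 0
  rw [this, mul_one]

lemma ρ_comp (r s : R) : ρ r ≫ ρ s = ρ (r * s) := by
  refine hom_ext fun x => ?_
  funext i
  rw [comp_apply', ρ_apply, ρ_apply, ρ_apply, mul_assoc]

lemma ρ_add (r s : R) : ρ (r + s) = ρ r + ρ s := by
  refine hom_ext fun x => ?_
  funext i
  rw [add_apply']
  exact mul_add _ _ _

/-- `t r = Φ(ρ r)(u1)`. -/
noncomputable def t (r : R) : (Φ.obj (Rn R 1)).obj := homToLin (Φ.map (ρ r)) (u1 Φ u)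

lemma t_eq (r : R) : t Φ u r = S Φ u (Rn R 1) (r • e₁) := by
  rw [S_apply, fa_smul_e₁]; rfl

/-- `r ↦ r • e₁` as an equivalence. -/
def smulE : R ≃ (Rn R 1).obj where
  toFun r := r • e₁
  invFun x := x 0
  left_inv r := by show r * 1 = r; rw [mul_one]
  right_inv x := (eq_smul_e₁ x).symm

/-- `r ↦ t r` as an equivalence. -/
noncomputable def tEquiv : R ≃ (Φ.obj (Rn R 1)).obj :=
  smulE.trans (S Φ u (Rn R 1)).toEquiv

lemma tEquiv_apply (r : R) : tEquiv Φ u r = t Φ u r := (t_eq Φ u r).symm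

/-- `r ↦ r • u1` as an equivalence. -/
def wEquiv : R ≃ (Φ.obj (Rn R 1)).obj :=
  smulE.trans (linearEquivOfIso u).toEquiv

lemma wEquiv_apply (r : R) : wEquiv Φ u r = r • u1 Φ u := by
  show homToLin u.hom (r • e₁) = r • homToLin u.hom e₁
  exact map_smul (homToLin u.hom) r e₁

lemma w_inj {r s : R} (h : r • u1 Φ u = s • u1 Φ u) : r = s := by
  apply (wEquiv Φ u).injective
  rw [wEquiv_apply, wEquiv_apply] at *
  exact h

/-- The underlying equivalence of the ring automorphism. -/
noncomputable def σEquiv : R ≃ R := (tEquiv Φ u).trans (wEquiv Φ u).symm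

lemma σ_key (r : R) : σEquiv Φ u r • u1 Φ u = t Φ u r := by
  rw [← wEquiv_apply Φ u, σEquiv]
  show wEquiv Φ u ((wEquiv Φ u).symm (tEquiv Φ u r)) = _
  rw [Equiv.apply_symm_apply, tEquiv_apply]

/-- The ring automorphism `σ`. -/
noncomputable def σ : R ≃+* R :=
  { σEquiv Φ u with
    map_add' := fun r s => by
      apply w_inj Φ u
      show σEquiv Φ u (r + s) • u1 Φ u = (σEquiv Φ u r + σEquiv Φ u s) • u1 Φ u
      rw [add_smul, σ_key, σ_key, σ_key]
      show t Φ u (r + s) = t Φ u r + t Φ u s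
      unfold t
      rw [ρ_add, Φ.map_add, add_apply']
    map_mul' := fun r s => by
      apply w_inj Φ u
      show σEquiv Φ u (r * s) • u1 Φ u = (σEquiv Φ u r * σEquiv Φ u s) • u1 Φ u
      rw [σ_key, ← smul_smul, σ_key]
      show t Φ u (r * s) = σEquiv Φ u r • t Φ u s
      unfold t
      rw [← ρ_comp, Φ.map_comp, comp_apply']
      show homToLin (Φ.map (ρ s)) (t Φ u r) = _
      rw [← σ_key Φ u r, map_smul] }

lemma fa_smul {F : CR R} (r : R) (a : F.obj) : fa (r • a) = ρ r ≫ fa a := by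
  refine hom_ext fun x => ?_
  rw [comp_apply', fa_apply, fa_apply, ρ_apply, mul_smul]

lemma S_smul (F : CR R) (r : R) (a : F.obj) :
    S Φ u F (r • a) = σ Φ u r • S Φ u F a := by
  rw [S_apply, S_apply, fa_smul, Φ.map_comp, comp_apply']
  show homToLin (Φ.map (fa a)) (t Φ u r) = _
  rw [← σ_key Φ u r, map_smul]
  rfl

lemma fa_comp {F G : CR R} (f : F ⟶ G) (a : F.obj) :
    fa a ≫ f = fa (homToLin f a) := by
  refine hom_ext fun x => ?_
  rw [comp_apply', fa_apply, fa_apply, map_smul]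

lemma S_natural {F G : CR R} (f : F ⟶ G) (a : F.obj) :
    homToLin (Φ.map f) (S Φ u F a) = S Φ u G (homToLin f a) := by
  rw [S_apply, S_apply, ← comp_apply', ← Φ.map_comp, fa_comp]

end Main

end Stmt7Aux

/-- if `R` is a ring with invariant basis number, then every automorphism
of the category `C_R` of finitely generated free left `R`-modules is semi-inner. -/
theorem stmt7 (R : Type) [Ring R]
    (hIBN : ∀ n m : ℕ, Nonempty ((Fin n → R) ≃ₗ[R] (Fin m → R)) → n = m)
    (φ : Aut (Cat.of (CR R))) :
    SemiInner R φ := by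
  classical
  open Stmt7Aux Limits in
  -- set up the functor and its properties
  let E : Cat.of (CR R) ≌ Cat.of (CR R) := Cat.equivOfIso φ
  let Φ : CR R ⥤ CR R := (φ.hom.toFunctor : CR R ⥤ CR R)
  haveI hEq : Φ.IsEquivalence := by exact Equivalence.isEquivalence_functor E
  haveI : PreservesLimitsOfShape (Discrete WalkingPair) Φ := inferInstance
  haveI : Φ.Additive := Functor.additive_of_preserves_binary_products Φ
  -- the rank of Φ(R¹) is 1
  let Ψ : CR R ⥤ CR R := (φ.inv.toFunctor : CR R ⥤ CR R)
  have hcomp : Ψ ⋙ Φ = 𝟭 (CR R) := congrArg Cat.Hom.toFunctor φ.inv_hom_id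
  have hK : Φ.obj (Ψ.obj (Rn R 1)) = Rn R 1 := Functor.congr_obj hcomp (Rn R 1)
  set K : CR R := Ψ.obj (Rn R 1) with hKdef
  have h1 : rk (Φ.obj (Rn R (rk K))) = 1 := by
    have i : Rn R (rk K) ≅ K := (isoOfLinearEquiv (rk_spec K).some).symm
    rw [rk_congr hIBN (Φ.mapIso i), hK, rk_Rn hIBN]
  have h2 : rk K * rk (Φ.obj (Rn R 1)) = 1 := by
    rw [← rk_map_mul Φ hIBN (rk K)]; exact h1
  have h3 : rk (Φ.obj (Rn R 1)) = 1 := Nat.dvd_one.mp ⟨rk K, by rw [Nat.mul_comm]; exact h2.symm⟩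
  -- the isomorphism u : R¹ ≅ Φ(R¹)
  have h4 : Nonempty ((Φ.obj (Rn R 1)).obj ≃ₗ[R] (Fin 1 → R)) := by
    have := rk_spec (Φ.obj (Rn R 1)); rwa [h3] at this
  let u : Rn R 1 ≅ Φ.obj (Rn R 1) := isoOfLinearEquiv h4.some.symm
  exact ⟨σ Φ u, S Φ u, S_smul Φ u, fun F G f a => S_natural Φ u f a⟩
end

section
/- Let R be a ring belonging to one of the following classes: left (or right) Artinian rings; left (or right) Noetherian rings; nontrivial commutative rings; division rings. Then every automorphism of the category C_R of finitely generated free left R-modules is semi-inner. -/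
open CategoryTheory

section SplitPair

variable {S : Type} [Ring S]

/-- A "split pair" of families certifying a split injection `S^κ → S`. -/
def IsSplitPair {κ : Type} (a d : κ → S) : Prop :=
  (∀ j, a j * d j = 1) ∧ (∀ j i, j ≠ i → a j * d i = 0)

theorem IsSplitPair.op {κ : Type} {a d : κ → S} (h : IsSplitPair a d) :
    IsSplitPair (fun i => MulOpposite.op (d i)) (fun j => MulOpposite.op (a j)) := by
  constructor
  · intro j
    show MulOpposite.op (d j) * MulOpposite.op (a j) = 1
    rw [← MulOpposite.op_mul, h.1 j, MulOpposite.op_one]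
  · intro j i hij
    show MulOpposite.op (d j) * MulOpposite.op (a i) = 0
    rw [← MulOpposite.op_mul, h.2 i j (fun hh => hij hh.symm), MulOpposite.op_zero]

theorem IsSplitPair.card_le_one_of_src [StrongRankCondition S] {κ : Type} [Fintype κ]
    {a d : κ → S} (h : IsSplitPair a d) : Fintype.card κ ≤ 1 := by
  classical
  have key : ∀ (z : κ → S) (j : κ), (∑ i, z i * a i) * d j = z j := by
    intro z j
    rw [Finset.sum_mul]
    have : ∀ i, z i * a i * d j = if i = j then z i else 0 := by
      intro i
      by_cases hij : i = j
      · subst hij; rw [mul_assoc, h.1 i, mul_one, if_pos rfl]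
      · rw [mul_assoc, h.2 i j hij, mul_zero, if_neg hij]
    simp_rw [this]
    simp
  let f : (κ → S) →ₗ[S] (Fin 1 → S) :=
    { toFun := fun z _ => ∑ i, z i * a i
      map_add' := by intro x y; funext; simp [add_mul, Finset.sum_add_distrib]
      map_smul' := by intro c x; funext; simp [smul_eq_mul, mul_assoc, Finset.mul_sum] }
  have hinj : Function.Injective f := by
    intro x y hxy
    funext j
    calc x j = (∑ i, x i * a i) * d j := (key x j).symm
      _ = (∑ i, y i * a i) * d j := by rw [show (∑ i, x i * a i) = ∑ i, y i * a i from congrFun hxy 0]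
      _ = y j := key y j
  simpa using card_le_of_injective S f hinj

theorem IsSplitPair.card_le_one_of_artinian [Nontrivial S] [IsArtinian S S] {κ : Type} [Fintype κ]
    {a d : κ → S} (h : IsSplitPair a d) : Fintype.card κ ≤ 1 := by
  by_contra hc
  have hc' : 1 < Fintype.card κ := by omega
  obtain ⟨j, k, hjk⟩ := Fintype.exists_pair_of_one_lt_card hc'
  set e : S →ₗ[S] S :=
    { toFun := fun x => x * a j
      map_add' := by intro x y; simp [add_mul]
      map_smul' := by intro c x; simp [smul_eq_mul, mul_assoc] } with he
  have hinj : Function.Injective e := by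
    intro x y hxy
    have hxy' : (x * a j) * d j = (y * a j) * d j := by
      rw [show x * a j = y * a j from hxy]
    rwa [mul_assoc, mul_assoc, h.1 j, mul_one, mul_one] at hxy'
  obtain ⟨x, hx⟩ := IsArtinian.surjective_of_injective_endomorphism e hinj (a k)
  have hx' : x * a j = a k := hx
  have h1 : a k * d j = x := by
    rw [← hx', mul_assoc, h.1 j, mul_one]
  rw [h.2 k j hjk.symm] at h1
  have h2 : a k = 0 := by rw [← hx', ← h1, zero_mul]
  have h3 := h.1 k
  rw [h2, zero_mul] at h3
  exact zero_ne_one h3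

end SplitPair

section CRAux

variable {R : Type} [Ring R]

/-- `R` itself as an object of `C_R`. -/
def CRunit (R : Type) [Ring R] : CR R :=
  ⟨ModuleCat.of R R, ⟨(inferInstance : Module.Finite R R), (inferInstance : Module.Free R R)⟩⟩

lemma CR.hom_ext {F G : CR R} {f g : F ⟶ G} (h : ∀ x : F.obj, homToLin f x = homToLin g x) :
    f = g := InducedCategory.hom_ext (ModuleCat.hom_ext (LinearMap.ext h))

lemma CR.comp_apply {F G H : CR R} (f : F ⟶ G) (g : G ⟶ H) (x : F.obj) :
    homToLin (f ≫ g) x = homToLin g (homToLin f x) := rfl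

lemma CR.id_apply {F : CR R} (x : F.obj) : homToLin (𝟙 F) x = x := rfl

/-- Viewing a ring element as an element of the object `CRunit R`. -/
def toUnitObj (r : R) : (CRunit R).obj := r

/-- Viewing an element of the object `CRunit R` as a ring element. -/
def fromUnitObj (x : (CRunit R).obj) : R := x

/-- A morphism of `C_R` from an `R`-linear map. -/
def CR.mkHom {F G : CR R} (l : F.obj →ₗ[R] G.obj) : F ⟶ G :=
  ObjectProperty.homMk (ModuleCat.ofHom l)

/-- The morphism `R → F` sending `1` to `a`. -/
def tsm {F : CR R} (a : F.obj) : CRunit R ⟶ F :=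
  CR.mkHom (F := CRunit R) (LinearMap.toSpanSingleton R F.obj a)

lemma tsm_apply {F : CR R} (a : F.obj) (x : (CRunit R).obj) :
    homToLin (tsm a) x = fromUnitObj x • a := rfl

lemma tsm_eval_one {F : CR R} (f : CRunit R ⟶ F) : tsm (homToLin f (toUnitObj 1)) = f := by
  apply CR.hom_ext
  intro x
  rw [tsm_apply, ← map_smul]
  congr 1
  show fromUnitObj x * 1 = fromUnitObj x
  rw [mul_one]

lemma tsm_comp {F G : CR R} (f : F ⟶ G) (a : F.obj) :
    tsm a ≫ f = tsm (homToLin f a) := by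
  apply CR.hom_ext
  intro x
  rw [CR.comp_apply, tsm_apply, tsm_apply, map_smul]

lemma tsm_smul {F : CR R} (r : R) (a : F.obj) :
    tsm (r • a) = tsm (show (CRunit R).obj from r) ≫ tsm a := by
  apply CR.hom_ext
  intro x
  exact (mul_smul (fromUnitObj x) r a).symm

instance : Preadditive (CR R) :=
  Preadditive.fullSubcategory (fun M : ModuleCat.{0} R => Module.Finite R M ∧ Module.Free R M)

lemma CR.add_apply {F G : CR R} (f g : F ⟶ G) (x : F.obj) :
    homToLin (f + g) x = homToLin f x + homToLin g x := rfl

lemma tsm_add {F : CR R} (a b : F.obj) : tsm (a + b) = tsm a + tsm b := by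
  apply CR.hom_ext
  intro x
  rw [CR.add_apply, tsm_apply, tsm_apply, tsm_apply, smul_add]

/-- An isomorphism in `C_R` from a linear equivalence. -/
def CR.isoOfLinearEquiv {F G : CR R} (e : F.obj ≃ₗ[R] G.obj) : F ≅ G where
  hom := CR.mkHom (e.toLinearMap : F.obj →ₗ[R] G.obj)
  inv := CR.mkHom (e.symm.toLinearMap : G.obj →ₗ[R] F.obj)
  hom_inv_id := CR.hom_ext fun x => e.symm_apply_apply x
  inv_hom_id := CR.hom_ext fun x => e.apply_symm_apply x

/-- Binary biproducts in `C_R`. -/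
noncomputable instance : Limits.HasBinaryBiproducts (CR R) := by
  constructor
  intro F G
  haveI : Module.Finite R F.obj := F.property.1; haveI : Module.Free R F.obj := F.property.2
  haveI : Module.Finite R G.obj := G.property.1; haveI : Module.Free R G.obj := G.property.2
  refine Limits.hasBinaryBiproduct_of_total
    { pt := ⟨ModuleCat.of R (F.obj × G.obj), ⟨(inferInstance : Module.Finite R (F.obj × G.obj)), (inferInstance : Module.Free R (F.obj × G.obj))⟩⟩
      fst := CR.mkHom (LinearMap.fst R F.obj G.obj : _ →ₗ[R] _)
      snd := CR.mkHom (LinearMap.snd R F.obj G.obj : _ →ₗ[R] _)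
      inl := CR.mkHom (LinearMap.inl R F.obj G.obj : _ →ₗ[R] _)
      inr := CR.mkHom (LinearMap.inr R F.obj G.obj : _ →ₗ[R] _)
      inl_fst := CR.hom_ext fun x => rfl
      inl_snd := CR.hom_ext fun x => rfl
      inr_fst := CR.hom_ext fun x => rfl
      inr_snd := CR.hom_ext fun x => rfl } ?_
  apply CR.hom_ext
  intro x
  show ((x.1, 0) : F.obj × G.obj) + ((0, x.2) : F.obj × G.obj) = x
  simp

end CRAux

set_option linter.unusedSectionVars false

section Construction

variable {R : Type} [Ring R] (Φ : CR R ⥤ CR R) [Φ.Full] [Φ.Faithful] [Φ.Additive]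
variable (u : CRunit R ≅ Φ.obj (CRunit R))

lemma unit_decomp (x : (CRunit R).obj) : x = fromUnitObj x • toUnitObj 1 := by
  show fromUnitObj x = fromUnitObj x * 1
  rw [mul_one]

/-- The distinguished element of `Φ(R)`. -/
noncomputable def eZero : (Φ.obj (CRunit R)).obj := homToLin u.hom (toUnitObj 1)

/-- The forward map of the semilinear isomorphism `F ≃+ Φ(F)`. -/
noncomputable def sFun {F : CR R} (a : F.obj) : (Φ.obj F).obj :=
  homToLin (Φ.map (tsm a)) (eZero Φ u)

/-- The inverse map. -/
noncomputable def sInv {F : CR R} (h : (Φ.obj F).obj) : F.obj :=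
  homToLin (Φ.preimage (u.inv ≫ tsm h)) (toUnitObj 1)

lemma u_inv_eZero : homToLin u.inv (eZero Φ u) = toUnitObj 1 := by
  rw [eZero, ← CR.comp_apply, u.hom_inv_id, CR.id_apply]

lemma uhom_apply (x : (CRunit R).obj) :
    homToLin u.hom x = fromUnitObj x • eZero Φ u := by
  conv_lhs => rw [unit_decomp x]
  rw [map_smul, eZero]

lemma tsm_sFun {F : CR R} (a : F.obj) :
    u.inv ≫ tsm (sFun Φ u a) = Φ.map (tsm a) := by
  rw [Iso.inv_comp_eq]
  apply CR.hom_ext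
  intro x
  rw [CR.comp_apply, tsm_apply, sFun, uhom_apply, map_smul]

lemma sInv_sFun {F : CR R} (a : F.obj) : sInv Φ u (sFun Φ u a) = a := by
  rw [sInv, tsm_sFun, Φ.preimage_map, tsm_apply]
  show (1 : R) • a = a
  rw [one_smul]

lemma sFun_sInv {F : CR R} (h : (Φ.obj F).obj) : sFun Φ u (sInv Φ u h) = h := by
  rw [sFun, sInv, tsm_eval_one, Φ.map_preimage, CR.comp_apply, u_inv_eZero, tsm_apply]
  show (1 : R) • h = h
  rw [one_smul]

lemma sFun_add {F : CR R} (a b : F.obj) :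
    sFun Φ u (a + b) = sFun Φ u a + sFun Φ u b := by
  rw [sFun, tsm_add, Φ.map_add, CR.add_apply]; rfl

/-- The ring automorphism. -/
noncomputable def sigmaFun (r : R) : R :=
  fromUnitObj (homToLin u.inv (sFun Φ u (toUnitObj r)))

lemma sFun_unit (r : R) :
    sFun Φ u (toUnitObj r) = sigmaFun Φ u r • eZero Φ u := by
  have h1 : homToLin u.hom (toUnitObj (sigmaFun Φ u r)) = sFun Φ u (toUnitObj r) := by
    have h2 : toUnitObj (R := R) (sigmaFun Φ u r) = homToLin u.inv (sFun Φ u (toUnitObj r)) := rfl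
    rw [h2, ← CR.comp_apply, u.inv_hom_id, CR.id_apply]
  rw [← h1, uhom_apply]
  rfl

lemma sFun_smul {F : CR R} (r : R) (a : F.obj) :
    sFun Φ u (r • a) = sigmaFun Φ u r • sFun Φ u a := by
  have h0 : tsm (r • a) = tsm (toUnitObj r) ≫ tsm a := tsm_smul r a
  rw [sFun, h0, Φ.map_comp, CR.comp_apply]
  have h1 : homToLin (Φ.map (tsm (toUnitObj r))) (eZero Φ u)
      = sigmaFun Φ u r • eZero Φ u := sFun_unit Φ u r
  rw [h1, map_smul]
  rfl

lemma sigmaFun_mul (r s : R) :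
    sigmaFun Φ u (r * s) = sigmaFun Φ u r * sigmaFun Φ u s := by
  have h1 : toUnitObj (R := R) (r * s) = r • toUnitObj s := rfl
  show fromUnitObj (homToLin u.inv (sFun Φ u (toUnitObj (r * s)))) = _
  rw [h1, sFun_smul, map_smul]
  rfl

lemma sigmaFun_add (r s : R) :
    sigmaFun Φ u (r + s) = sigmaFun Φ u r + sigmaFun Φ u s := by
  have h1 : toUnitObj (R := R) (r + s) = toUnitObj r + toUnitObj s := rfl
  show fromUnitObj (homToLin u.inv (sFun Φ u (toUnitObj (r + s)))) = _
  rw [h1, sFun_add, map_add]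
  rfl

lemma sigmaFun_bijective : Function.Bijective (sigmaFun Φ u) := by
  constructor
  · intro r s hrs
    have h1 : sFun Φ u (toUnitObj r) = sFun Φ u (toUnitObj s) := by
      rw [sFun_unit, sFun_unit, hrs]
    have h2 := congrArg (sInv Φ u) h1
    rw [sInv_sFun, sInv_sFun] at h2
    exact congrArg fromUnitObj h2
  · intro y
    refine ⟨fromUnitObj (sInv Φ u (homToLin u.hom (toUnitObj y))), ?_⟩
    show fromUnitObj (homToLin u.inv (sFun Φ u _)) = y
    have : toUnitObj (R := R) (fromUnitObj (sInv Φ u (homToLin u.hom (toUnitObj y))))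
        = sInv Φ u (homToLin u.hom (toUnitObj y)) := rfl
    rw [this, sFun_sInv, ← CR.comp_apply, u.hom_inv_id, CR.id_apply]
    rfl

lemma sFun_natural {F G : CR R} (f : F ⟶ G) (a : F.obj) :
    homToLin (Φ.map f) (sFun Φ u a) = sFun Φ u (homToLin f a) := by
  rw [sFun, sFun, ← tsm_comp, Φ.map_comp, CR.comp_apply]

end Construction

section Construction2

variable {R : Type} [Ring R] (Φ : CR R ⥤ CR R) [Φ.Full] [Φ.Faithful] [Φ.Additive]
variable (u : CRunit R ≅ Φ.obj (CRunit R))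

/-- The ring automorphism, packaged. -/
noncomputable def sigmaEquiv : R ≃+* R :=
  { Equiv.ofBijective _ (sigmaFun_bijective Φ u) with
    map_mul' := sigmaFun_mul Φ u
    map_add' := sigmaFun_add Φ u }

/-- The additive isomorphisms, packaged. -/
noncomputable def sAddEquiv (F : CR R) : F.obj ≃+ (Φ.obj F).obj :=
  { toFun := sFun Φ u
    invFun := sInv Φ u
    left_inv := sInv_sFun Φ u
    right_inv := sFun_sInv Φ u
    map_add' := sFun_add Φ u }

end Construction2

section UnitIso

variable {R : Type} [Ring R]

theorem end_not_subsingleton [Nontrivial R] :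
    ¬ Subsingleton (CRunit R ⟶ CRunit R) := by
  intro hsub
  have h1 := Subsingleton.elim (tsm (toUnitObj (0 : R))) (tsm (toUnitObj (1 : R)))
  have h2 := congrArg (fun f => homToLin f (toUnitObj (1 : R))) h1
  simp only [tsm_apply] at h2
  have h3 : (1 : R) * 0 = 1 * 1 := h2
  rw [one_mul, one_mul] at h3
  exact zero_ne_one h3

theorem exists_unit_iso [Nontrivial R]
    (hbound : ∀ (κ : Type) [Fintype κ], ∀ a d : κ → R, IsSplitPair a d → Fintype.card κ ≤ 1)
    (Φ : CR R ⥤ CR R) [Φ.Full] [Φ.Faithful]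
    (Ψ : CR R ⥤ CR R) (hΨ : Ψ ⋙ Φ = 𝟭 (CR R)) :
    Nonempty (CRunit R ≅ Φ.obj (CRunit R)) := by
  classical
  have hGX : Φ.obj (Ψ.obj (CRunit R)) = CRunit R :=
    congrArg (fun (T : CR R ⥤ CR R) => T.obj (CRunit R)) hΨ
  -- the preimage of `R` under `Φ` is a nontrivial module
  have hGnt : Nontrivial (Ψ.obj (CRunit R)).obj := by
    by_contra hns
    rw [not_nontrivial_iff_subsingleton] at hns
    have h3 : Subsingleton (Φ.obj (Ψ.obj (CRunit R)) ⟶ Φ.obj (Ψ.obj (CRunit R))) := by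
      constructor
      intro f g
      obtain ⟨f', rfl⟩ := Φ.map_surjective f
      obtain ⟨g', rfl⟩ := Φ.map_surjective g
      rw [show f' = g' from CR.hom_ext fun x => Subsingleton.elim _ _]
    rw [hGX] at h3
    exact end_not_subsingleton h3
  haveI := (Ψ.obj (CRunit R)).property.1
  haveI := (Ψ.obj (CRunit R)).property.2
  -- a basis vector of the preimage gives a retract `R → Ψ(R) → R`
  set bG := Module.Free.chooseBasis R (Ψ.obj (CRunit R)).obj with hbGdef
  have hne : Nonempty (Module.Free.ChooseBasisIndex R (Ψ.obj (CRunit R)).obj) := by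
    by_contra hemp
    rw [not_nonempty_iff] at hemp
    have : Subsingleton (Ψ.obj (CRunit R)).obj := bG.equivFun.toEquiv.subsingleton
    rw [← not_nontrivial_iff_subsingleton] at this
    exact this hGnt
  obtain ⟨i0⟩ := hne
  set iXG : CRunit R ⟶ Ψ.obj (CRunit R) := tsm (bG i0) with hiXG
  set rGX : Ψ.obj (CRunit R) ⟶ CRunit R :=
    CR.mkHom (G := CRunit R) (bG.coord i0 : (Ψ.obj (CRunit R)).obj →ₗ[R] R) with hrGX
  have hir : iXG ≫ rGX = 𝟙 (CRunit R) := by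
    apply CR.hom_ext
    intro x
    rw [CR.comp_apply, CR.id_apply, hiXG, tsm_apply, map_smul]
    have hcoord : homToLin rGX (bG i0) = toUnitObj 1 := by
      show bG.coord i0 (bG i0) = 1
      simp
    rw [hcoord]
    exact (unit_decomp x).symm
  -- transport along `Φ` : `Φ(R)` is a retract of `R`
  set iY : Φ.obj (CRunit R) ⟶ CRunit R := Φ.map iXG ≫ eqToHom hGX with hiY
  set pY : CRunit R ⟶ Φ.obj (CRunit R) := eqToHom hGX.symm ≫ Φ.map rGX with hpY
  have hretr : iY ≫ pY = 𝟙 (Φ.obj (CRunit R)) := by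
    rw [hiY, hpY, Category.assoc, ← Category.assoc (eqToHom hGX), eqToHom_trans, eqToHom_refl,
      Category.id_comp, ← Φ.map_comp, hir, Φ.map_id]
  have hgf : ∀ m : (Φ.obj (CRunit R)).obj, homToLin pY (homToLin iY m) = m := by
    intro m
    rw [← CR.comp_apply, hretr, CR.id_apply]
  -- a basis of `Φ(R)` and the associated split pair
  haveI := (Φ.obj (CRunit R)).property.1
  haveI := (Φ.obj (CRunit R)).property.2
  set cY := Module.Free.chooseBasis R (Φ.obj (CRunit R)).obj with hcYdef
  set a : Module.Free.ChooseBasisIndex R (Φ.obj (CRunit R)).obj → R :=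
    fun j => fromUnitObj (homToLin iY (cY j)) with ha
  set d : Module.Free.ChooseBasisIndex R (Φ.obj (CRunit R)).obj → R :=
    fun i => cY.repr (homToLin pY (toUnitObj 1)) i with hd
  have hbj : ∀ j, cY j = a j • homToLin pY (toUnitObj 1) := by
    intro j
    conv_lhs => rw [← hgf (cY j)]
    rw [← map_smul]
    congr 1
    exact unit_decomp _
  have hpair : IsSplitPair a d := by
    constructor
    · intro j
      have h1 := congrArg (fun v => cY.repr v j) (hbj j)
      simp only [map_smul, Finsupp.smul_apply, smul_eq_mul, Module.Basis.repr_self,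
        Finsupp.single_apply, if_pos rfl] at h1
      exact h1.symm
    · intro j i hji
      have h1 := congrArg (fun v => cY.repr v i) (hbj j)
      simp only [map_smul, Finsupp.smul_apply, smul_eq_mul, Module.Basis.repr_self,
        Finsupp.single_apply, if_neg hji] at h1
      exact h1.symm
  have hcard : Fintype.card (Module.Free.ChooseBasisIndex R (Φ.obj (CRunit R)).obj) ≤ 1 :=
    hbound _ a d hpair
  -- `Φ(R)` is nontrivial
  have hYnt : Nontrivial (Φ.obj (CRunit R)).obj := by
    by_contra hns
    rw [not_nontrivial_iff_subsingleton] at hns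
    have h3 : Subsingleton (CRunit R ⟶ CRunit R) :=
      ⟨fun f g => Φ.map_injective (CR.hom_ext fun x => Subsingleton.elim _ _)⟩
    exact end_not_subsingleton h3
  have hne' : Nonempty (Module.Free.ChooseBasisIndex R (Φ.obj (CRunit R)).obj) := by
    by_contra hemp
    rw [not_nonempty_iff] at hemp
    have : Subsingleton (Φ.obj (CRunit R)).obj := cY.equivFun.toEquiv.subsingleton
    rw [← not_nontrivial_iff_subsingleton] at this
    exact this hYnt
  have hcard1 : Fintype.card (Module.Free.ChooseBasisIndex R (Φ.obj (CRunit R)).obj) = 1 :=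
    le_antisymm hcard (Fintype.card_pos_iff.mpr hne')
  let eκ := Fintype.equivFinOfCardEq hcard1
  let lin : (Φ.obj (CRunit R)).obj ≃ₗ[R] R :=
    cY.equivFun.trans ((LinearEquiv.funCongrLeft R R eκ).symm.trans
      (LinearEquiv.funUnique (Fin 1) R R))
  exact ⟨CR.isoOfLinearEquiv lin.symm⟩

end UnitIso
/-- The additive equivalence between two subsingleton monoids. -/
def trivialAddEquiv {M N : Type} [AddCommMonoid M] [AddCommMonoid N]
    [Subsingleton M] [Subsingleton N] : M ≃+ N where
  toFun := fun _ => 0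
  invFun := fun _ => 0
  left_inv := fun _ => Subsingleton.elim _ _
  right_inv := fun _ => Subsingleton.elim _ _
  map_add' := fun _ _ => Subsingleton.elim _ _

theorem semiInner_aux (R : Type) [Ring R] [Nontrivial R]
    (hbound : ∀ (κ : Type) [Fintype κ], ∀ a d : κ → R, IsSplitPair a d → Fintype.card κ ≤ 1)
    (φ : Aut (Cat.of (CR R))) : SemiInner R φ := by
  let Φ : CR R ⥤ CR R := (φ.hom.toFunctor : CR R ⥤ CR R)
  haveI : Φ.IsEquivalence := (Cat.equivOfIso φ).isEquivalence_functor
  haveI := CategoryTheory.Limits.preservesBinaryBiproducts_of_preservesBinaryProducts Φ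
  haveI : Φ.Additive := Functor.additive_of_preservesBinaryBiproducts Φ
  obtain ⟨u⟩ := exists_unit_iso hbound Φ (φ.inv.toFunctor : CR R ⥤ CR R)
    (show (φ.inv.toFunctor : CR R ⥤ CR R) ⋙ Φ = 𝟭 (CR R) from congrArg Cat.Hom.toFunctor φ.inv_hom_id)
  exact ⟨sigmaEquiv Φ u, sAddEquiv Φ u, fun F r a => sFun_smul Φ u r a,
    fun F G f a => sFun_natural Φ u f a⟩

/-- if `R` is left or right Artinian, left or right Noetherian, a
nontrivial commutative ring, or a division ring, then every automorphism of the
category `C_R` of finitely generated free left `R`-modules is semi-inner. -/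
theorem stmt8 (R : Type) [Ring R]
    (hR : IsArtinian R R ∨ IsArtinian Rᵐᵒᵖ Rᵐᵒᵖ ∨
          IsNoetherian R R ∨ IsNoetherian Rᵐᵒᵖ Rᵐᵒᵖ ∨
          ((∀ a b : R, a * b = b * a) ∧ Nontrivial R) ∨
          (Nontrivial R ∧ ∀ a : R, a ≠ 0 → IsUnit a))
    (φ : Aut (Cat.of (CR R))) :
    SemiInner R φ := by
  by_cases htriv : Subsingleton R
  · have hsub : ∀ F : CR R, Subsingleton F.obj := fun F => Module.subsingleton R _
    exact ⟨RingEquiv.refl R, fun F => @trivialAddEquiv _ _ _ _ (hsub F) (hsub _),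
      fun F r a => @Subsingleton.elim _ (hsub _) _ _, fun F G f a => @Subsingleton.elim _ (hsub _) _ _⟩
  · rw [not_subsingleton_iff_nontrivial] at htriv
    haveI := htriv
    have hbound : ∀ (κ : Type) [Fintype κ], ∀ a d : κ → R,
        IsSplitPair a d → Fintype.card κ ≤ 1 := by
      rcases hR with h | h | h | h | ⟨hc, _⟩ | ⟨_, hdiv⟩
      · intro κ _ a d hp
        haveI := h
        exact hp.card_le_one_of_artinian
      · intro κ _ a d hp
        haveI := h
        exact hp.op.card_le_one_of_artinian
      · haveI : IsNoetherianRing R := h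
        intro κ _ a d hp
        exact hp.card_le_one_of_src
      · haveI : IsNoetherianRing Rᵐᵒᵖ := h
        intro κ _ a d hp
        exact hp.op.card_le_one_of_src
      · letI : CommRing R := { ‹Ring R› with mul_comm := hc }
        intro κ _ a d hp
        exact hp.card_le_one_of_src
      · haveI : IsNoetherianRing R := by
          refine ⟨fun s => ?_⟩
          by_cases hs : s = ⊥
          · subst hs; exact Submodule.fg_bot
          · have hstop : s = ⊤ := by
              obtain ⟨x, hxs, hx0⟩ := Submodule.exists_mem_ne_zero_of_ne_bot hs
              obtain ⟨v, hv⟩ := hdiv x hx0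
              rw [eq_top_iff]
              intro y _
              have h1 : (1 : R) ∈ s := by
                have h2 := s.smul_mem ((v⁻¹ : Rˣ) : R) hxs
                rw [← hv, smul_eq_mul, Units.inv_mul] at h2
                exact h2
              have h3 := s.smul_mem y h1
              rwa [smul_eq_mul, mul_one] at h3
            rw [hstop]
            exact ⟨{1}, by simp⟩
        intro κ _ a d hp
        exact hp.card_le_one_of_src
    exact semiInner_aux R hbound φ
end

section
/- Let R be a ring with invariant basis number whose only ring automorphism is the identity. Then every automorphism of the category C_R of finitely generated free left R-modules is inner, i.e., naturally isomorphic to the identity functor. -/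
open CategoryTheory

namespace S9
variable {R : Type} [Ring R]

def linToHom {F G : CR R} (l : F.obj →ₗ[R] G.obj) : F ⟶ G :=
  ObjectProperty.homMk (ModuleCat.ofHom l)

def stdO (R : Type) [Ring R] (n : ℕ) : CR R :=
  ⟨ModuleCat.of R (Fin n → R), ⟨inferInstanceAs (Module.Finite R (Fin n → R)),
    inferInstanceAs (Module.Free R (Fin n → R))⟩⟩

def prodO (F G : CR R) : CR R := by
  haveI := F.property.1; haveI := F.property.2
  haveI := G.property.1; haveI := G.property.2
  exact ⟨ModuleCat.of R (F.obj × G.obj), ⟨inferInstanceAs (Module.Finite R (F.obj × G.obj)),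
    inferInstanceAs (Module.Free R (F.obj × G.obj))⟩⟩

@[simp] lemma homToLin_comp {F G H : CR R} (f : F ⟶ G) (g : G ⟶ H) (x : F.obj) :
    homToLin (f ≫ g) x = homToLin g (homToLin f x) := rfl

@[simp] lemma homToLin_id {F : CR R} (x : F.obj) : homToLin (𝟙 F) x = x := rfl

@[simp] lemma homToLin_linToHom {F G : CR R} (l : F.obj →ₗ[R] G.obj) :
    homToLin (linToHom l) = l := rfl

lemma hom_ext {F G : CR R} (f g : F ⟶ G) (h : ∀ x, homToLin f x = homToLin g x) : f = g :=
  ObjectProperty.hom_ext _ (ModuleCat.hom_ext (LinearMap.ext h))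

def isoOfLequiv {F G : CR R} (e : F.obj ≃ₗ[R] G.obj) : F ≅ G where
  hom := linToHom (e : F.obj →ₗ[R] G.obj)
  inv := linToHom (e.symm : G.obj →ₗ[R] F.obj)
  hom_inv_id := hom_ext _ _ fun x => e.symm_apply_apply x
  inv_hom_id := hom_ext _ _ fun x => e.apply_symm_apply x

def lequivOfIso {F G : CR R} (i : F ≅ G) : F.obj ≃ₗ[R] G.obj :=
  LinearEquiv.ofLinear (homToLin i.hom) (homToLin i.inv)
    (LinearMap.ext fun x => congrArg (fun (f : G ⟶ G) => homToLin f x) i.inv_hom_id)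
    (LinearMap.ext fun x => congrArg (fun (f : F ⟶ F) => homToLin f x) i.hom_inv_id)

lemma exists_equiv (F : CR R) : ∃ n, Nonempty (F.obj ≃ₗ[R] (Fin n → R)) := by
  haveI := F.property.1; haveI := F.property.2
  let b := Module.Free.chooseBasis R F.obj
  exact ⟨Fintype.card (Module.Free.ChooseBasisIndex R F.obj),
    ⟨b.equivFun.trans (LinearEquiv.funCongrLeft R R (Fintype.equivFin _).symm)⟩⟩

/-- the zero morphism -/
def zeroHom (F G : CR R) : F ⟶ G := linToHom (0 : F.obj →ₗ[R] G.obj)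

@[simp] lemma homToLin_zeroHom (F G : CR R) (x : F.obj) : homToLin (zeroHom F G) x = 0 := rfl

@[simp] lemma zeroHom_comp {F G H : CR R} (g : G ⟶ H) : zeroHom F G ≫ g = zeroHom F H :=
  hom_ext _ _ fun x => by simp

@[simp] lemma comp_zeroHom {F G H : CR R} (f : F ⟶ G) : f ≫ zeroHom G H = zeroHom F H :=
  hom_ext _ _ fun x => by simp

section Equiv
variable (e : CR R ≌ CR R)

/-- if all endomorphisms of `F` agree then `F.obj` is a subsingleton -/
lemma subsingleton_of_end_subsingleton (F : CR R) (h : ∀ f g : F ⟶ F, f = g) :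
    ∀ x y : F.obj, x = y := by
  intro x y
  have h0 : (𝟙 F : F ⟶ F) = zeroHom F F := h _ _
  have hx : x = homToLin (𝟙 F) x := rfl
  have hy : y = homToLin (𝟙 F) y := rfl
  rw [hx, hy, h0]; simp

lemma functor_obj_subsingleton (F : CR R) (hF : ∀ x y : F.obj, x = y) :
    ∀ x y : (e.functor.obj F).obj, x = y := by
  have : ∀ f g : e.functor.obj F ⟶ e.functor.obj F, f = g := by
    intro f g
    have hf := e.fullyFaithfulFunctor.map_preimage f
    have hg := e.fullyFaithfulFunctor.map_preimage g
    rw [← hf, ← hg]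
    congr 1
    exact hom_ext _ _ fun x => hF _ _
  exact subsingleton_of_end_subsingleton _ this

lemma map_zeroHom (F G : CR R) : e.functor.map (zeroHom F G) = zeroHom _ _ := by
  have hz : ∀ x y : (stdO R 0).obj, x = y := by
    intro x y
    funext i; exact absurd i.2 (by omega)
  have hfact : zeroHom F G = zeroHom F (stdO R 0) ≫ zeroHom (stdO R 0) G := by simp
  rw [hfact, e.functor.map_comp]
  apply hom_ext; intro x
  simp only [homToLin_comp]
  have h1 : homToLin (e.functor.map (zeroHom F (stdO R 0))) x = 0 :=
    functor_obj_subsingleton e _ hz _ _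
  rw [h1]
  simp

end Equiv

/-! ### evaluation at the standard basis vector of `stdO R 1` -/

def e1 (R : Type) [Ring R] : (stdO R 1).obj := fun _ => (1:R)

def evInv (X : CR R) (x : X.obj) : stdO R 1 ⟶ X :=
  linToHom
    { toFun := fun v => v 0 • x
      map_add' := fun v w => by
        change (v 0 + w 0) • x = v 0 • x + w 0 • x
        rw [add_smul]
      map_smul' := fun r v => by
        change (r * v 0) • x = r • (v 0 • x)
        rw [mul_smul] }

@[simp] lemma evInv_apply (X : CR R) (x : X.obj) (v : (stdO R 1).obj) :
    homToLin (evInv X x) v = v 0 • x := rfl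

@[simp] lemma evInv_e1 (X : CR R) (x : X.obj) : homToLin (evInv X x) (e1 R) = x := by
  rw [evInv_apply]
  exact one_smul R x

lemma eq_evInv (X : CR R) (h : stdO R 1 ⟶ X) : h = evInv X (homToLin h (e1 R)) := by
  apply hom_ext; intro v
  have hv : v = v 0 • (e1 R) := by
    funext i
    have hi : i = 0 := Subsingleton.elim i 0
    subst hi
    change v 0 = v 0 * 1
    rw [mul_one]
  conv_lhs => rw [hv]
  rw [map_smul]
  exact (evInv_apply X (homToLin h (e1 R)) v).symm

lemma evInv_zero (X : CR R) : evInv X 0 = zeroHom _ _ := by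
  apply hom_ext; intro v; simp

lemma evInv_comp {X Y : CR R} (x : X.obj) (f : X ⟶ Y) :
    evInv X x ≫ f = evInv Y (homToLin f x) := by
  apply hom_ext; intro v
  simp [map_smul]

/-! ### product preservation and additivity -/

def fstH (A B : CR R) : prodO A B ⟶ A := linToHom (LinearMap.fst R A.obj B.obj)
def sndH (A B : CR R) : prodO A B ⟶ B := linToHom (LinearMap.snd R A.obj B.obj)
def inlH (A B : CR R) : A ⟶ prodO A B := linToHom (LinearMap.inl R A.obj B.obj)
def inrH (A B : CR R) : B ⟶ prodO A B := linToHom (LinearMap.inr R A.obj B.obj)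

@[simp] lemma fstH_apply (A B : CR R) (z : (prodO A B).obj) :
    homToLin (fstH A B) z = z.1 := rfl
@[simp] lemma sndH_apply (A B : CR R) (z : (prodO A B).obj) :
    homToLin (sndH A B) z = z.2 := rfl
@[simp] lemma inlH_apply (A B : CR R) (a : A.obj) :
    homToLin (inlH A B) a = (a, 0) := rfl
@[simp] lemma inrH_apply (A B : CR R) (b : B.obj) :
    homToLin (inrH A B) b = (0, b) := rfl

lemma inl_fst (A B : CR R) : inlH A B ≫ fstH A B = 𝟙 A := hom_ext _ _ fun _ => rfl
lemma inr_snd (A B : CR R) : inrH A B ≫ sndH A B = 𝟙 B := hom_ext _ _ fun _ => rfl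
lemma inl_snd (A B : CR R) : inlH A B ≫ sndH A B = zeroHom _ _ := hom_ext _ _ fun _ => rfl
lemma inr_fst (A B : CR R) : inrH A B ≫ fstH A B = zeroHom _ _ := hom_ext _ _ fun _ => rfl

section Equiv2
variable (e : CR R ≌ CR R)

/-- key injectivity: a point of `Φ(A × B)` with both projections zero is zero -/
lemma phi_prod_inj (hs : ∀ W : CR R, e.functor.obj (e.inverse.obj W) = W)
    (A B : CR R) (z : (e.functor.obj (prodO A B)).obj)
    (h1 : homToLin (e.functor.map (fstH A B)) z = 0)
    (h2 : homToLin (e.functor.map (sndH A B)) z = 0) : z = 0 := by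
  have hmaph0 : e.functor.map (e.fullyFaithfulFunctor.preimage
      (eqToHom (hs (stdO R 1)) ≫ evInv (e.functor.obj (prodO A B)) z))
      = eqToHom (hs (stdO R 1)) ≫ evInv (e.functor.obj (prodO A B)) z :=
    e.fullyFaithfulFunctor.map_preimage _
  have hc1 : e.fullyFaithfulFunctor.preimage
      (eqToHom (hs (stdO R 1)) ≫ evInv (e.functor.obj (prodO A B)) z) ≫ fstH A B
      = zeroHom _ _ := by
    apply e.functor.map_injective
    rw [e.functor.map_comp, hmaph0, map_zeroHom, Category.assoc, evInv_comp, h1, evInv_zero,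
      comp_zeroHom]
  have hc2 : e.fullyFaithfulFunctor.preimage
      (eqToHom (hs (stdO R 1)) ≫ evInv (e.functor.obj (prodO A B)) z) ≫ sndH A B
      = zeroHom _ _ := by
    apply e.functor.map_injective
    rw [e.functor.map_comp, hmaph0, map_zeroHom, Category.assoc, evInv_comp, h2, evInv_zero,
      comp_zeroHom]
  have hz0 : e.fullyFaithfulFunctor.preimage
      (eqToHom (hs (stdO R 1)) ≫ evInv (e.functor.obj (prodO A B)) z) = zeroHom _ _ := by
    apply hom_ext; intro x
    have e1' := congrArg (fun (f : e.inverse.obj (stdO R 1) ⟶ A) => homToLin f x) hc1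
    have e2' := congrArg (fun (f : e.inverse.obj (stdO R 1) ⟶ B) => homToLin f x) hc2
    simp only [homToLin_comp, homToLin_zeroHom, fstH_apply, sndH_apply] at e1' e2'
    exact Prod.ext e1' e2'
  have hqh : eqToHom (hs (stdO R 1)) ≫ evInv (e.functor.obj (prodO A B)) z = zeroHom _ _ := by
    rw [← hmaph0, hz0, map_zeroHom]
  have hhz : evInv (e.functor.obj (prodO A B)) z = zeroHom _ _ := by
    have h3 := congrArg (fun (f : e.functor.obj (e.inverse.obj (stdO R 1)) ⟶
      e.functor.obj (prodO A B)) => eqToHom (hs (stdO R 1)).symm ≫ f) hqh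
    simpa [eqToHom_trans_assoc] using h3
  have hz : z = homToLin (evInv (e.functor.obj (prodO A B)) z) (e1 R) := (evInv_e1 _ _).symm
  rw [hz, hhz]; simp

lemma phi_decomp (hs : ∀ W : CR R, e.functor.obj (e.inverse.obj W) = W)
    (A B : CR R) (z : (e.functor.obj (prodO A B)).obj) :
    z = homToLin (e.functor.map (inlH A B)) (homToLin (e.functor.map (fstH A B)) z)
      + homToLin (e.functor.map (inrH A B)) (homToLin (e.functor.map (sndH A B)) z) := by
  have comp1 : ∀ (a : (e.functor.obj A).obj),
      homToLin (e.functor.map (fstH A B)) (homToLin (e.functor.map (inlH A B)) a) = a := by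
    intro a
    have h := congrArg (fun (f : e.functor.obj A ⟶ e.functor.obj A) => homToLin f a)
      (by rw [← e.functor.map_comp, inl_fst, e.functor.map_id] :
        e.functor.map (inlH A B) ≫ e.functor.map (fstH A B) = 𝟙 _)
    simpa using h
  have comp2 : ∀ (b : (e.functor.obj B).obj),
      homToLin (e.functor.map (sndH A B)) (homToLin (e.functor.map (inrH A B)) b) = b := by
    intro b
    have h := congrArg (fun (f : e.functor.obj B ⟶ e.functor.obj B) => homToLin f b)
      (by rw [← e.functor.map_comp, inr_snd, e.functor.map_id] :
        e.functor.map (inrH A B) ≫ e.functor.map (sndH A B) = 𝟙 _)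
    simpa using h
  have comp3 : ∀ (b : (e.functor.obj B).obj),
      homToLin (e.functor.map (fstH A B)) (homToLin (e.functor.map (inrH A B)) b) = 0 := by
    intro b
    have h := congrArg (fun (f : e.functor.obj B ⟶ e.functor.obj A) => homToLin f b)
      (by rw [← e.functor.map_comp, inr_fst, map_zeroHom] :
        e.functor.map (inrH A B) ≫ e.functor.map (fstH A B) = e.functor.map (zeroHom _ _))
    simp only [homToLin_comp] at h
    rw [h, map_zeroHom]
    simp
  have comp4 : ∀ (a : (e.functor.obj A).obj),
      homToLin (e.functor.map (sndH A B)) (homToLin (e.functor.map (inlH A B)) a) = 0 := by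
    intro a
    have h := congrArg (fun (f : e.functor.obj A ⟶ e.functor.obj B) => homToLin f a)
      (by rw [← e.functor.map_comp, inl_snd, map_zeroHom] :
        e.functor.map (inlH A B) ≫ e.functor.map (sndH A B) = e.functor.map (zeroHom _ _))
    simp only [homToLin_comp] at h
    rw [h, map_zeroHom]
    simp
  have hd : z - (homToLin (e.functor.map (inlH A B)) (homToLin (e.functor.map (fstH A B)) z)
      + homToLin (e.functor.map (inrH A B)) (homToLin (e.functor.map (sndH A B)) z)) = 0 := by
    apply phi_prod_inj e hs
    · rw [map_sub, map_add, comp1, comp3]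
      simp
    · rw [map_sub, map_add, comp4, comp2]
      simp
  exact sub_eq_zero.mp hd

/-- the functor of a strict equivalence is additive -/
lemma map_addHom (hs : ∀ W : CR R, e.functor.obj (e.inverse.obj W) = W)
    {X Y : CR R} (f g : X ⟶ Y) :
    e.functor.map (linToHom (homToLin f + homToLin g))
      = linToHom (homToLin (e.functor.map f) + homToLin (e.functor.map g)) := by
  have hdm : (linToHom (LinearMap.prod (homToLin f) (homToLin g)) : X ⟶ prodO Y Y)
      ≫ linToHom (LinearMap.coprod LinearMap.id LinearMap.id)
      = linToHom (homToLin f + homToLin g) := hom_ext _ _ fun _ => rfl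
  have hdfst : (linToHom (LinearMap.prod (homToLin f) (homToLin g)) : X ⟶ prodO Y Y)
      ≫ fstH Y Y = f := hom_ext _ _ fun _ => rfl
  have hdsnd : (linToHom (LinearMap.prod (homToLin f) (homToLin g)) : X ⟶ prodO Y Y)
      ≫ sndH Y Y = g := hom_ext _ _ fun _ => rfl
  have hinlm : inlH Y Y ≫ (linToHom (LinearMap.coprod LinearMap.id LinearMap.id)
      : prodO Y Y ⟶ Y) = 𝟙 Y := hom_ext _ _ fun x => add_zero x
  have hinrm : inrH Y Y ≫ (linToHom (LinearMap.coprod LinearMap.id LinearMap.id)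
      : prodO Y Y ⟶ Y) = 𝟙 Y := hom_ext _ _ fun x => zero_add x
  apply hom_ext; intro x
  rw [← hdm, e.functor.map_comp]
  rw [homToLin_comp]
  rw [phi_decomp e hs Y Y
    (homToLin (e.functor.map (linToHom (LinearMap.prod (homToLin f) (homToLin g)))) x)]
  rw [map_add]
  have c1 : ∀ a, homToLin (e.functor.map (linToHom
      (LinearMap.coprod LinearMap.id LinearMap.id) : prodO Y Y ⟶ Y))
      (homToLin (e.functor.map (inlH Y Y)) a) = a := by
    intro a
    have h := congrArg (fun (k : e.functor.obj Y ⟶ e.functor.obj Y) => homToLin k a)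
      (by rw [← e.functor.map_comp, hinlm, e.functor.map_id] :
        e.functor.map (inlH Y Y) ≫ e.functor.map (linToHom
          (LinearMap.coprod LinearMap.id LinearMap.id) : prodO Y Y ⟶ Y) = 𝟙 _)
    simpa using h
  have c2 : ∀ a, homToLin (e.functor.map (linToHom
      (LinearMap.coprod LinearMap.id LinearMap.id) : prodO Y Y ⟶ Y))
      (homToLin (e.functor.map (inrH Y Y)) a) = a := by
    intro a
    have h := congrArg (fun (k : e.functor.obj Y ⟶ e.functor.obj Y) => homToLin k a)
      (by rw [← e.functor.map_comp, hinrm, e.functor.map_id] :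
        e.functor.map (inrH Y Y) ≫ e.functor.map (linToHom
          (LinearMap.coprod LinearMap.id LinearMap.id) : prodO Y Y ⟶ Y) = 𝟙 _)
    simpa using h
  rw [c1, c2]
  have d1 : homToLin (e.functor.map (fstH Y Y)) (homToLin (e.functor.map
      (linToHom (LinearMap.prod (homToLin f) (homToLin g)) : X ⟶ prodO Y Y)) x)
      = homToLin (e.functor.map f) x := by
    have h := congrArg (fun (k : e.functor.obj X ⟶ e.functor.obj Y) => homToLin k x)
      (by rw [← e.functor.map_comp, hdfst] :
        e.functor.map (linToHom (LinearMap.prod (homToLin f) (homToLin g)) : X ⟶ prodO Y Y)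
          ≫ e.functor.map (fstH Y Y) = e.functor.map f)
    simpa using h
  have d2 : homToLin (e.functor.map (sndH Y Y)) (homToLin (e.functor.map
      (linToHom (LinearMap.prod (homToLin f) (homToLin g)) : X ⟶ prodO Y Y)) x)
      = homToLin (e.functor.map g) x := by
    have h := congrArg (fun (k : e.functor.obj X ⟶ e.functor.obj Y) => homToLin k x)
      (by rw [← e.functor.map_comp, hdsnd] :
        e.functor.map (linToHom (LinearMap.prod (homToLin f) (homToLin g)) : X ⟶ prodO Y Y)
          ≫ e.functor.map (sndH Y Y) = e.functor.map g)
    simpa using h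
  rw [d1, d2]
  rfl

/-- `Φ(A × B)` is linearly the product of `Φ A` and `Φ B` -/
noncomputable def phiProdLequiv (hs : ∀ W : CR R, e.functor.obj (e.inverse.obj W) = W)
    (A B : CR R) :
    (e.functor.obj (prodO A B)).obj ≃ₗ[R] (e.functor.obj A).obj × (e.functor.obj B).obj :=
  LinearEquiv.ofLinear
    (LinearMap.prod (homToLin (e.functor.map (fstH A B))) (homToLin (e.functor.map (sndH A B))))
    (LinearMap.coprod (homToLin (e.functor.map (inlH A B))) (homToLin (e.functor.map (inrH A B))))
    (by
      apply LinearMap.ext; rintro ⟨a, b⟩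
      have comp1 : homToLin (e.functor.map (fstH A B))
          (homToLin (e.functor.map (inlH A B)) a) = a := by
        have h := congrArg (fun (k : e.functor.obj A ⟶ e.functor.obj A) => homToLin k a)
          (by rw [← e.functor.map_comp, inl_fst, e.functor.map_id] :
            e.functor.map (inlH A B) ≫ e.functor.map (fstH A B) = 𝟙 _)
        simpa using h
      have comp2 : homToLin (e.functor.map (sndH A B))
          (homToLin (e.functor.map (inrH A B)) b) = b := by
        have h := congrArg (fun (k : e.functor.obj B ⟶ e.functor.obj B) => homToLin k b)
          (by rw [← e.functor.map_comp, inr_snd, e.functor.map_id] :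
            e.functor.map (inrH A B) ≫ e.functor.map (sndH A B) = 𝟙 _)
        simpa using h
      have comp3 : homToLin (e.functor.map (fstH A B))
          (homToLin (e.functor.map (inrH A B)) b) = 0 := by
        have h := congrArg (fun (k : e.functor.obj B ⟶ e.functor.obj A) => homToLin k b)
          (by rw [← e.functor.map_comp, inr_fst, map_zeroHom] :
            e.functor.map (inrH A B) ≫ e.functor.map (fstH A B) = e.functor.map (zeroHom _ _))
        simp only [homToLin_comp] at h
        rw [h, map_zeroHom]; simp
      have comp4 : homToLin (e.functor.map (sndH A B))
          (homToLin (e.functor.map (inlH A B)) a) = 0 := by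
        have h := congrArg (fun (k : e.functor.obj A ⟶ e.functor.obj B) => homToLin k a)
          (by rw [← e.functor.map_comp, inl_snd, map_zeroHom] :
            e.functor.map (inlH A B) ≫ e.functor.map (sndH A B) = e.functor.map (zeroHom _ _))
        simp only [homToLin_comp] at h
        rw [h, map_zeroHom]; simp
      simp only [LinearMap.comp_apply, LinearMap.coprod_apply, LinearMap.prod_apply,
        LinearMap.id_apply, Pi.prod, map_add, comp1, comp2, comp3, comp4]
      simp [comp1, comp2, comp3, comp4])
    (by
      apply LinearMap.ext; intro z
      simp only [LinearMap.comp_apply, LinearMap.prod_apply, LinearMap.coprod_apply,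
        LinearMap.id_apply, Pi.prod]
      exact (phi_decomp e hs A B z).symm)

/-- the rank of `Φ(R^n)` is `n` times the rank of `Φ(R)` -/
lemma phi_std_rank (hs : ∀ W : CR R, e.functor.obj (e.inverse.obj W) = W)
    {k : ℕ} (ek : (e.functor.obj (stdO R 1)).obj ≃ₗ[R] (Fin k → R)) (n : ℕ) :
    Nonempty ((e.functor.obj (stdO R n)).obj ≃ₗ[R] (Fin (n*k) → R)) := by
  induction n with
  | zero =>
    rw [Nat.zero_mul]
    have hsub : ∀ x y : (e.functor.obj (stdO R 0)).obj, x = y := by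
      apply functor_obj_subsingleton
      intro x y
      funext i
      exact absurd i.2 (by omega)
    exact ⟨LinearEquiv.ofLinear 0 0 (LinearMap.ext fun x => Subsingleton.elim _ _)
      (LinearMap.ext fun x => hsub _ _)⟩
  | succ n ih =>
    obtain ⟨en⟩ := ih
    rw [Nat.succ_mul]
    have splitEquiv : (stdO R (n+1)).obj ≃ₗ[R] (prodO (stdO R n) (stdO R 1)).obj :=
      (LinearEquiv.funCongrLeft R R finSumFinEquiv).trans
        (LinearEquiv.sumArrowLequivProdArrow (Fin n) (Fin 1) R R)
    have prodToFun : ((Fin (n*k) → R) × (Fin k → R)) ≃ₗ[R] (Fin (n*k+k) → R) :=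
      (LinearEquiv.sumArrowLequivProdArrow (Fin (n*k)) (Fin k) R R).symm.trans
        (LinearEquiv.funCongrLeft R R finSumFinEquiv).symm
    exact ⟨(lequivOfIso (e.functor.mapIso (isoOfLequiv splitEquiv))).trans
      ((phiProdLequiv e hs (stdO R n) (stdO R 1)).trans ((en.prodCongr ek).trans prodToFun))⟩

end Equiv2

/-! ### the endomorphism ring of `stdO R 1` -/

def muH (r : R) : stdO R 1 ⟶ stdO R 1 := evInv _ (fun _ => r)
def th (f : stdO R 1 ⟶ stdO R 1) : R := homToLin f (e1 R) 0

lemma th_mu (r : R) : th (muH r) = r := by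
  unfold th muH
  exact congrFun (evInv_e1 (stdO R 1) (fun _ => r)) 0

lemma mu_th (f : stdO R 1 ⟶ stdO R 1) : muH (th f) = f := by
  have h : (fun _ => th f : (stdO R 1).obj) = homToLin f (e1 R) := by
    funext i
    have hi : i = 0 := Subsingleton.elim i 0
    subst hi
    rfl
  unfold muH
  rw [h]
  exact (eq_evInv _ f).symm

lemma th_comp (f g : stdO R 1 ⟶ stdO R 1) : th (f ≫ g) = th f * th g := by
  have h1 : homToLin f (e1 R) = th f • (e1 R) := by
    funext i
    have hi : i = 0 := Subsingleton.elim i 0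
    subst hi
    change homToLin f (e1 R) 0 = th f * 1
    rw [mul_one]
    rfl
  show homToLin (f ≫ g) (e1 R) 0 = th f * th g
  rw [homToLin_comp, h1, map_smul]
  change th f * homToLin g (e1 R) 0 = th f * th g
  rfl

lemma th_add (f g : stdO R 1 ⟶ stdO R 1) :
    th (linToHom (homToLin f + homToLin g)) = th f + th g := rfl

lemma mu_mul (r s : R) : muH (r * s) = muH r ≫ muH s := by
  apply hom_ext; intro v
  funext i
  change v 0 * (r * s) = (v 0 * r) * s
  rw [mul_assoc]

lemma mu_add (r s : R) :
    muH (r + s) = linToHom (homToLin (muH r) + homToLin (muH s)) := by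
  apply hom_ext; intro v
  funext i
  change v 0 * (r + s) = v 0 * r + v 0 * s
  rw [mul_add]

section Equiv3
variable (e : CR R ≌ CR R)

def conjH (u : e.functor.obj (stdO R 1) ≅ stdO R 1) (f : stdO R 1 ⟶ stdO R 1) :
    stdO R 1 ⟶ stdO R 1 := u.inv ≫ e.functor.map f ≫ u.hom

lemma conj_comp (u : e.functor.obj (stdO R 1) ≅ stdO R 1) (f g : stdO R 1 ⟶ stdO R 1) :
    conjH e u (f ≫ g) = conjH e u f ≫ conjH e u g := by
  simp [conjH, e.functor.map_comp]

lemma conj_add (hs : ∀ W : CR R, e.functor.obj (e.inverse.obj W) = W)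
    (u : e.functor.obj (stdO R 1) ≅ stdO R 1) (f g : stdO R 1 ⟶ stdO R 1) :
    conjH e u (linToHom (homToLin f + homToLin g))
      = linToHom (homToLin (conjH e u f) + homToLin (conjH e u g)) := by
  unfold conjH
  rw [map_addHom e hs]
  apply hom_ext; intro v
  change homToLin u.hom (homToLin (e.functor.map f) (homToLin u.inv v)
      + homToLin (e.functor.map g) (homToLin u.inv v))
    = homToLin u.hom (homToLin (e.functor.map f) (homToLin u.inv v))
      + homToLin u.hom (homToLin (e.functor.map g) (homToLin u.inv v))
  exact map_add (homToLin u.hom) _ _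

/-- the ring automorphism of `R` induced by the equivalence -/
noncomputable def sigmaE (hs : ∀ W : CR R, e.functor.obj (e.inverse.obj W) = W)
    (u : e.functor.obj (stdO R 1) ≅ stdO R 1) : R ≃+* R where
  toFun r := th (conjH e u (muH r))
  invFun r := th (e.fullyFaithfulFunctor.preimage (u.hom ≫ muH r ≫ u.inv))
  left_inv r := by
    show th (e.fullyFaithfulFunctor.preimage (u.hom ≫ muH (th (conjH e u (muH r))) ≫ u.inv)) = r
    rw [mu_th]
    have h2 : u.hom ≫ conjH e u (muH r) ≫ u.inv = e.functor.map (muH r) := by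
      simp [conjH]
    rw [h2, e.fullyFaithfulFunctor.preimage_map, th_mu]
  right_inv r := by
    show th (conjH e u (muH (th (e.fullyFaithfulFunctor.preimage (u.hom ≫ muH r ≫ u.inv))))) = r
    rw [mu_th]
    unfold conjH
    rw [e.fullyFaithfulFunctor.map_preimage]
    have h2 : u.inv ≫ (u.hom ≫ muH r ≫ u.inv) ≫ u.hom = muH r := by simp
    rw [h2, th_mu]
  map_mul' r s := by
    show th (conjH e u (muH (r * s))) = th (conjH e u (muH r)) * th (conjH e u (muH s))
    rw [mu_mul, conj_comp, th_comp]
  map_add' r s := by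
    show th (conjH e u (muH (r + s))) = th (conjH e u (muH r)) + th (conjH e u (muH s))
    rw [mu_add, conj_add e hs, th_add]

lemma conj_eq_self (hs : ∀ W : CR R, e.functor.obj (e.inverse.obj W) = W)
    (u : e.functor.obj (stdO R 1) ≅ stdO R 1)
    (hAut : ∀ σ : R ≃+* R, σ = RingEquiv.refl R) (f : stdO R 1 ⟶ stdO R 1) :
    conjH e u f = f := by
  have hr : ∀ r, th (conjH e u (muH r)) = r := by
    intro r
    have h := DFunLike.congr_fun (hAut (sigmaE e hs u)) r
    exact h
  calc conjH e u f = conjH e u (muH (th f)) := by rw [mu_th]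
    _ = muH (th (conjH e u (muH (th f)))) := (mu_th _).symm
    _ = muH (th f) := by rw [hr]
    _ = f := mu_th f

lemma map_end (hs : ∀ W : CR R, e.functor.obj (e.inverse.obj W) = W)
    (u : e.functor.obj (stdO R 1) ≅ stdO R 1)
    (hAut : ∀ σ : R ≃+* R, σ = RingEquiv.refl R) (f : stdO R 1 ⟶ stdO R 1) :
    e.functor.map f = u.hom ≫ f ≫ u.inv := by
  conv_rhs => rw [← conj_eq_self e hs u hAut f]
  simp [conjH]

/-! ### the additive/semilinear components -/

def sFun (u : e.functor.obj (stdO R 1) ≅ stdO R 1) (X : CR R) (x : X.obj) :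
    (e.functor.obj X).obj :=
  homToLin (e.functor.map (evInv X x)) (homToLin u.inv (e1 R))

lemma u_inv_hom (u : e.functor.obj (stdO R 1) ≅ stdO R 1) :
    homToLin u.hom (homToLin u.inv (e1 R)) = e1 R := by
  rw [← homToLin_comp, Iso.inv_hom_id]
  exact homToLin_id _

lemma s_add (hs : ∀ W : CR R, e.functor.obj (e.inverse.obj W) = W)
    (u : e.functor.obj (stdO R 1) ≅ stdO R 1) (X : CR R) (x x' : X.obj) :
    sFun e u X (x + x') = sFun e u X x + sFun e u X x' := by
  have h : evInv X (x + x') = linToHom (homToLin (evInv X x) + homToLin (evInv X x')) := by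
    apply hom_ext; intro v
    change v 0 • (x + x') = v 0 • x + v 0 • x'
    rw [smul_add]
  unfold sFun
  rw [h, map_addHom e hs]
  rfl

lemma s_smul (hs : ∀ W : CR R, e.functor.obj (e.inverse.obj W) = W)
    (u : e.functor.obj (stdO R 1) ≅ stdO R 1)
    (hconj : ∀ f : stdO R 1 ⟶ stdO R 1, e.functor.map f = u.hom ≫ f ≫ u.inv)
    (X : CR R) (r : R) (x : X.obj) :
    sFun e u X (r • x) = r • sFun e u X x := by
  have h : evInv X (r • x) = muH r ≫ evInv X x := by
    apply hom_ext; intro v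
    change v 0 • (r • x) = (v 0 * r) • x
    rw [mul_smul]
  unfold sFun
  rw [h, e.functor.map_comp, homToLin_comp, hconj (muH r)]
  have h2 : homToLin (u.hom ≫ muH r ≫ u.inv) (homToLin u.inv (e1 R))
      = r • homToLin u.inv (e1 R) := by
    rw [homToLin_comp, homToLin_comp, u_inv_hom]
    have h4 : homToLin (muH r) (e1 R) = r • e1 R := by
      funext i
      have hi : i = 0 := Subsingleton.elim i 0
      subst hi
      change 1 * r = r * 1
      rw [one_mul, mul_one]
    rw [h4, map_smul]
  rw [h2, map_smul]

lemma s_nat (u : e.functor.obj (stdO R 1) ≅ stdO R 1) {X Y : CR R} (f : X ⟶ Y) (x : X.obj) :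
    sFun e u Y (homToLin f x) = homToLin (e.functor.map f) (sFun e u X x) := by
  unfold sFun
  rw [← evInv_comp, e.functor.map_comp, homToLin_comp]

lemma s_inj0 (u : e.functor.obj (stdO R 1) ≅ stdO R 1) (X : CR R) (x : X.obj)
    (h : sFun e u X x = 0) : x = 0 := by
  have h1 : u.inv ≫ e.functor.map (evInv X x) = zeroHom _ _ := by
    have h2 := eq_evInv _ (u.inv ≫ e.functor.map (evInv X x))
    rw [h2, homToLin_comp]
    rw [show homToLin (e.functor.map (evInv X x)) (homToLin u.inv (e1 R)) = 0 from h]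
    rw [evInv_zero]
  have h3 : e.functor.map (evInv X x) = e.functor.map (zeroHom _ _) := by
    rw [map_zeroHom]
    calc e.functor.map (evInv X x)
        = u.hom ≫ u.inv ≫ e.functor.map (evInv X x) := by
          rw [← Category.assoc, u.hom_inv_id, Category.id_comp]
      _ = u.hom ≫ zeroHom _ _ := by rw [h1]
      _ = zeroHom _ _ := comp_zeroHom _
  have h4 : evInv X x = zeroHom _ _ := e.functor.map_injective h3
  calc x = homToLin (evInv X x) (e1 R) := (evInv_e1 _ _).symm
    _ = 0 := by rw [h4]; simp

lemma s_surj (u : e.functor.obj (stdO R 1) ≅ stdO R 1) (X : CR R)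
    (y : (e.functor.obj X).obj) : ∃ x, sFun e u X x = y := by
  refine ⟨homToLin (e.fullyFaithfulFunctor.preimage
    (u.hom ≫ evInv (e.functor.obj X) y)) (e1 R), ?_⟩
  have hp : evInv X (homToLin (e.fullyFaithfulFunctor.preimage
      (u.hom ≫ evInv (e.functor.obj X) y)) (e1 R))
      = e.fullyFaithfulFunctor.preimage (u.hom ≫ evInv (e.functor.obj X) y) :=
    (eq_evInv _ _).symm
  unfold sFun
  rw [hp, e.fullyFaithfulFunctor.map_preimage, homToLin_comp, u_inv_hom]
  exact evInv_e1 _ y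

/-- the natural family of linear equivalences `X ≃ Φ X` -/
noncomputable def sLin (hs : ∀ W : CR R, e.functor.obj (e.inverse.obj W) = W)
    (u : e.functor.obj (stdO R 1) ≅ stdO R 1)
    (hconj : ∀ f : stdO R 1 ⟶ stdO R 1, e.functor.map f = u.hom ≫ f ≫ u.inv)
    (X : CR R) : X.obj →ₗ[R] (e.functor.obj X).obj where
  toFun := sFun e u X
  map_add' := s_add e hs u X
  map_smul' := s_smul e hs u hconj X

noncomputable def sEquiv (hs : ∀ W : CR R, e.functor.obj (e.inverse.obj W) = W)
    (u : e.functor.obj (stdO R 1) ≅ stdO R 1)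
    (hconj : ∀ f : stdO R 1 ⟶ stdO R 1, e.functor.map f = u.hom ≫ f ≫ u.inv)
    (X : CR R) : X.obj ≃ₗ[R] (e.functor.obj X).obj :=
  LinearEquiv.ofBijective (sLin e hs u hconj X)
    ⟨fun x x' hxx => by
      have h : sFun e u X (x - x') = 0 := by
        have hsub := map_sub (sLin e hs u hconj X) x x'
        have hxx' : sLin e hs u hconj X x = sLin e hs u hconj X x' := hxx
        calc sFun e u X (x - x') = sLin e hs u hconj X (x - x') := rfl
          _ = sLin e hs u hconj X x - sLin e hs u hconj X x' := hsub
          _ = 0 := by rw [hxx', sub_self]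
      exact sub_eq_zero.mp (s_inj0 e u X _ h),
    s_surj e u X⟩

/-- main lemma: every strict self-equivalence of `C_R` is naturally isomorphic
to the identity functor -/
lemma main_nat_iso (hs : ∀ W : CR R, e.functor.obj (e.inverse.obj W) = W)
    (hIBN : ∀ n m : ℕ, Nonempty ((Fin n → R) ≃ₗ[R] (Fin m → R)) → n = m)
    (hAut : ∀ σ : R ≃+* R, σ = RingEquiv.refl R) :
    Nonempty (e.functor ≅ 𝟭 (CR R)) := by
  obtain ⟨k, ⟨ek⟩⟩ := exists_equiv (e.functor.obj (stdO R 1))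
  obtain ⟨m, ⟨em⟩⟩ := exists_equiv (e.inverse.obj (stdO R 1))
  obtain ⟨emk⟩ := phi_std_rank e hs ek m
  have hiso : (e.functor.obj (e.inverse.obj (stdO R 1))).obj ≃ₗ[R] (Fin (m*k) → R) :=
    (lequivOfIso (e.functor.mapIso (isoOfLequiv em))).trans emk
  have hcast : (stdO R 1).obj ≃ₗ[R] (e.functor.obj (e.inverse.obj (stdO R 1))).obj :=
    lequivOfIso (eqToIso (hs (stdO R 1))).symm
  have h1 : Nonempty ((Fin 1 → R) ≃ₗ[R] (Fin (m*k) → R)) := ⟨hcast.trans hiso⟩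
  have hk1 : k = 1 := by
    have h2 := hIBN 1 (m*k) h1
    exact Nat.dvd_one.mp ⟨m, by rw [mul_comm]; exact h2⟩
  subst hk1
  have u : e.functor.obj (stdO R 1) ≅ stdO R 1 :=
    isoOfLequiv (F := e.functor.obj (stdO R 1)) (G := stdO R 1) ek
  have hconj : ∀ f : stdO R 1 ⟶ stdO R 1, e.functor.map f = u.hom ≫ f ≫ u.inv :=
    map_end e hs u hAut
  refine ⟨NatIso.ofComponents (fun X => isoOfLequiv (sEquiv e hs u hconj X).symm) ?_⟩
  intro X Y f
  apply hom_ext; intro z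
  rw [homToLin_comp, homToLin_comp]
  show (sEquiv e hs u hconj Y).symm (homToLin (e.functor.map f) z)
    = homToLin f ((sEquiv e hs u hconj X).symm z)
  apply (sEquiv e hs u hconj Y).injective
  rw [LinearEquiv.apply_symm_apply]
  have h5 : (sEquiv e hs u hconj Y) (homToLin f ((sEquiv e hs u hconj X).symm z))
      = sFun e u Y (homToLin f ((sEquiv e hs u hconj X).symm z)) := rfl
  rw [h5, s_nat e u f]
  have h6 : sFun e u X ((sEquiv e hs u hconj X).symm z) = z :=
    LinearEquiv.apply_symm_apply (sEquiv e hs u hconj X) z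
  rw [h6]

end Equiv3
end S9

/-- if `R` is a ring with invariant basis number whose only ring
automorphism is the identity, then every automorphism of the category `C_R` of finitely
generated free left `R`-modules is inner (naturally isomorphic to the identity). -/
theorem stmt9 (R : Type) [Ring R]
    (hIBN : ∀ n m : ℕ, Nonempty ((Fin n → R) ≃ₗ[R] (Fin m → R)) → n = m)
    (hAut : ∀ σ : R ≃+* R, σ = RingEquiv.refl R)
    (φ : Aut (Cat.of (CR R))) :
    Nonempty ((φ.hom.toFunctor : CR R ⥤ CR R) ≅ 𝟭 (CR R)) := by
  have hs : ∀ W : CR R,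
      (Cat.equivOfIso φ).functor.obj ((Cat.equivOfIso φ).inverse.obj W) = W := fun W =>
    Functor.congr_obj (congrArg Cat.Hom.toFunctor φ.inv_hom_id) W
  obtain ⟨η⟩ := S9.main_nat_iso (Cat.equivOfIso φ) hs hIBN hAut
  exact ⟨η⟩
end
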